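/- arXiv:1602.00641 — 5 statements merged into one kernel-verified Lean document; each statement's English description precedes it below -/
import Mathlib

section
/- For any permutation σ in the symmetric group S(d), there is exactly one way to write σ as a product of transpositions σ = (s₁ t₁)(s₂ t₂)⋯(s_r t_r) with sᵢ < tᵢ for all i and t₁ < t₂ < ⋯ < t_r (a strictly monotone factorization), and this factorization has length r = d − c(σ), where c(σ) is the number of cycles of σ. -/
/-- A transposition step `(s t)` of `S(d)` recorded with `s < t`; its colour is `t`. -/
def Step (d : ℕ) : Type := {p : Fin d × Fin d // p.1 < p.2}

/-- The permutation (transposition) corresponding to a step. -/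
def stepPerm {d : ℕ} (x : Step d) : Equiv.Perm (Fin d) := Equiv.swap x.1.1 x.1.2

/-- The colour of a step, i.e. the larger of the two interchanged points. -/
def colour {d : ℕ} (x : Step d) : Fin d := x.1.2

/-- Number of cycles of a permutation, including fixed points. -/
def cycleCount {d : ℕ} (σ : Equiv.Perm (Fin d)) : ℕ :=
  d - σ.support.card + σ.cycleType.card

open Equiv Equiv.Perm Finset List

lemma prod_fix {d : ℕ} (L : List (Step d)) (m : Fin d)
    (h : ∀ x ∈ L, colour x < m) {y : Fin d} (hy : m ≤ y) :
    (L.map stepPerm).prod y = y := by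
  induction L with
  | nil => simp
  | cons a t ih =>
    have h2 : a.1.2 < m := h a (List.mem_cons_self ..)
    have h1 : a.1.1 < m := lt_trans a.2 h2
    simp only [List.map_cons, List.prod_cons, Equiv.Perm.mul_apply]
    rw [ih (fun x hx => h x (List.mem_cons_of_mem _ hx))]
    exact Equiv.swap_apply_of_ne_of_ne
      (fun e => absurd (e ▸ hy) (not_le.2 h1))
      (fun e => absurd (e ▸ hy) (not_le.2 h2))

lemma prod_lt {d : ℕ} (L : List (Step d)) (m : Fin d)
    (h : ∀ x ∈ L, colour x < m) {s : Fin d} (hs : s < m) :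
    (L.map stepPerm).prod s < m := by
  by_contra hc
  push_neg at hc
  have := prod_fix L m h hc
  have h2 := (List.map stepPerm L).prod.injective this
  exact absurd hs (not_lt.2 (h2 ▸ hc))

lemma last_step {d : ℕ} (L : List (Step d)) (x : Step d) (σ : Equiv.Perm (Fin d))
    (hp : ((L ++ [x]).map stepPerm).prod = σ)
    (hs : ((L ++ [x]).map colour).Pairwise (· < ·)) :
    σ x.1.1 = x.1.2 ∧ σ x.1.2 < x.1.2 ∧ ∀ y, x.1.2 < y → σ y = y := by
  have hcol : ∀ z ∈ L, colour z < colour x := by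
    rw [List.map_append] at hs
    intro z hz
    exact (List.pairwise_append.1 hs).2.2 (colour z) (List.mem_map_of_mem (f := colour) hz)
      (colour x) (by simp)
  have hσ : σ = (L.map stepPerm).prod * Equiv.swap x.1.1 x.1.2 := by
    rw [← hp]; simp [stepPerm]
  refine ⟨?_, ?_, ?_⟩
  · rw [hσ, Equiv.Perm.mul_apply, Equiv.swap_apply_left]
    exact prod_fix L (colour x) hcol le_rfl
  · rw [hσ, Equiv.Perm.mul_apply, Equiv.swap_apply_right]
    exact prod_lt L (colour x) hcol x.2
  · intro y hy
    rw [hσ, Equiv.Perm.mul_apply,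
      Equiv.swap_apply_of_ne_of_ne (ne_of_gt (lt_trans x.2 hy)) (ne_of_gt hy)]
    exact prod_fix L (colour x) hcol (le_of_lt hy)


lemma colours_lt {d : ℕ} (L : List (Step d)) (τ : Equiv.Perm (Fin d))
    (hp : (L.map stepPerm).prod = τ) (hs : (L.map colour).Pairwise (· < ·))
    (m : Fin d) (hm : ∀ y ∈ τ.support, y < m) : ∀ z ∈ L, colour z < m := by
  rcases L.eq_nil_or_concat' with rfl | ⟨L₀, x, rfl⟩
  · simp
  · have hl := last_step L₀ x τ hp hs
    have hxm : colour x < m := hm _ (Equiv.Perm.mem_support.2 (ne_of_lt hl.2.1))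
    intro z hz
    rcases List.mem_append.1 hz with hz | hz
    · have hw : ∀ w ∈ L₀, colour w < colour x := by
        rw [List.map_append] at hs
        intro w hw
        exact (List.pairwise_append.1 hs).2.2 _ (List.mem_map_of_mem (f := colour) hw) _ (by simp)
      exact lt_trans (hw z hz) hxm
    · rw [List.mem_singleton.1 hz]; exact hxm

lemma key {d : ℕ} : ∀ (n : ℕ) (σ : Equiv.Perm (Fin d)), σ.support.card ≤ n →
    (∃ L : List (Step d), (L.map stepPerm).prod = σ ∧ (L.map colour).Pairwise (· < ·)) ∧
    (∀ L : List (Step d), (L.map stepPerm).prod = σ → (L.map colour).Pairwise (· < ·) →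
      L.length + σ.cycleType.card = σ.support.card ∧
      ∀ L' : List (Step d), (L'.map stepPerm).prod = σ →
        (L'.map colour).Pairwise (· < ·) → L = L') := by
  intro n
  induction n with
  | zero =>
    intro σ hσ
    have hσ1 : σ = 1 := by
      rw [← Equiv.Perm.support_eq_empty_iff, ← Finset.card_eq_zero]; omega
    subst hσ1
    have hnil : ∀ L : List (Step d), (L.map stepPerm).prod = 1 →
        (L.map colour).Pairwise (· < ·) → L = [] := by
      intro L hp hs
      rcases L.eq_nil_or_concat' with rfl | ⟨L₀, x, rfl⟩
      · rfl
      · exact absurd (last_step L₀ x 1 hp hs).2.1 (lt_irrefl _)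
    refine ⟨⟨[], by simp, by simp⟩, fun L hp hs => ?_⟩
    rw [hnil L hp hs]
    refine ⟨by simp [Equiv.Perm.cycleType_one], fun L' hp' hs' => (hnil L' hp' hs').symm⟩
  | succ n ih =>
    intro σ hσ
    by_cases hle : σ.support.card ≤ n
    · exact ih σ hle
    -- σ ≠ 1, support nonempty
    have hne : σ.support.Nonempty := by
      rw [← Finset.card_pos]; omega
    set M := σ.support.max' hne with hM_def
    have hM : M ∈ σ.support := σ.support.max'_mem hne
    set a := σ⁻¹ M with ha_def
    have hσa : σ a = M := Equiv.apply_symm_apply σ M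
    have haM : a ≠ M := by
      intro h
      rw [h] at hσa
      exact Equiv.Perm.mem_support.1 hM hσa
    have ha_supp : a ∈ σ.support := by
      rw [Equiv.Perm.mem_support, hσa]
      exact Ne.symm haM
    have haltM : a < M := lt_of_le_of_ne (σ.support.le_max' a ha_supp) haM
    set σ' := σ * Equiv.swap a M with hσ'_def
    have hback : σ' * Equiv.swap a M = σ := by
      rw [hσ'_def, mul_assoc, Equiv.swap_mul_self, mul_one]
    have hσ'M : σ' M = M := by
      rw [hσ'_def, Equiv.Perm.mul_apply, Equiv.swap_apply_right, hσa]
    have hσ'a : σ' a = σ M := by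
      rw [hσ'_def, Equiv.Perm.mul_apply, Equiv.swap_apply_left]
    have hσ'y : ∀ y, y ≠ a → y ≠ M → σ' y = σ y := by
      intro y h1 h2
      rw [hσ'_def, Equiv.Perm.mul_apply, Equiv.swap_apply_of_ne_of_ne h1 h2]
    have hsub : σ'.support ⊆ σ.support.erase M := by
      intro y hy
      rw [Equiv.Perm.mem_support] at hy
      rcases eq_or_ne y M with rfl | h2
      · exact absurd hσ'M hy
      rcases eq_or_ne y a with rfl | h1
      · exact Finset.mem_erase.2 ⟨h2, ha_supp⟩
      · rw [hσ'y y h1 h2] at hy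
        exact Finset.mem_erase.2 ⟨h2, Equiv.Perm.mem_support.2 hy⟩
    have hcard' : σ'.support.card ≤ n := by
      have := Finset.card_le_card hsub
      have := Finset.card_erase_of_mem hM
      omega
    obtain ⟨⟨L', hL'p, hL's⟩, hIH⟩ := ih σ' hcard'
    -- all colours of L' are < M
    have hsupp'_lt : ∀ y ∈ σ'.support, y < M := by
      intro y hy
      have := hsub hy
      rw [Finset.mem_erase] at this
      exact lt_of_le_of_ne (σ.support.le_max' y this.2) this.1
    have hcolL' : ∀ z ∈ L', colour z < M := colours_lt L' σ' hL'p hL's M hsupp'_lt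
    set x₀ : Step d := ⟨(a, M), haltM⟩ with hx₀
    have hLp : (((L' ++ [x₀]).map stepPerm).prod = σ) := by
      rw [List.map_append, List.prod_append]
      simp only [List.map_cons, List.map_nil, List.prod_cons, List.prod_nil, mul_one]
      rw [hL'p]
      exact hback
    have hLs : (((L' ++ [x₀]).map colour).Pairwise (· < ·)) := by
      rw [List.map_append]
      apply List.pairwise_append.2
      refine ⟨hL's, by simp, ?_⟩
      intro z hz w hw
      simp only [List.map_cons, List.map_nil, List.mem_singleton] at hw
      subst hw
      obtain ⟨z', hz', rfl⟩ := List.mem_map.1 hz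
      exact hcolL' z' hz'
    refine ⟨⟨L' ++ [x₀], hLp, hLs⟩, ?_⟩
    -- now the universal part
    intro L hp hs
    -- L is nonempty
    rcases L.eq_nil_or_concat' with rfl | ⟨L₀, x, rfl⟩
    · exfalso
      simp only [List.map_nil, List.prod_nil] at hp
      rw [← hp] at hM
      simp at hM
    have hl := last_step L₀ x σ hp hs
    -- colour x = M
    have hxM : colour x = M := by
      have h1 : colour x ≤ M := σ.support.le_max' _ (Equiv.Perm.mem_support.2 (ne_of_lt hl.2.1))
      have h2 : M ≤ colour x := by
        by_contra hc
        push_neg at hc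
        exact Equiv.Perm.mem_support.1 hM (hl.2.2 M hc)
      exact le_antisymm h1 h2
    have hxa : x.1.1 = a := by
      have h2' : x.1.2 = M := hxM
      have := hl.1
      rw [h2'] at this
      rw [ha_def, ← this, Equiv.Perm.coe_inv, Equiv.symm_apply_apply]
    have hx : x = x₀ := by
      apply Subtype.ext
      have h2 : x.1.2 = M := hxM
      exact Prod.ext hxa h2
    subst hx
    -- prefix is a factorization of σ'
    have hp₀ : (L₀.map stepPerm).prod = σ' := by
      rw [List.map_append] at hp
      rw [List.prod_append] at hp
      simp only [List.map_cons, List.map_nil, List.prod_cons, List.prod_nil, mul_one] at hp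
      have : (L₀.map stepPerm).prod * stepPerm x₀ * Equiv.swap a M = σ * Equiv.swap a M := by
        rw [hp]
      rw [mul_assoc] at this
      have hst : stepPerm x₀ * Equiv.swap a M = 1 := by
        simp [stepPerm, hx₀, Equiv.swap_mul_self]
      rw [hst, mul_one] at this
      rw [this, hσ'_def]
    have hs₀ : (L₀.map colour).Pairwise (· < ·) := by
      rw [List.map_append] at hs
      exact (List.pairwise_append.1 hs).1
    obtain ⟨hlen₀, huniq₀⟩ := hIH L₀ hp₀ hs₀
    constructor
    · -- length
      have hlength : (L₀ ++ [x₀]).length = L₀.length + 1 := by simp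
      by_cases hMa : σ M = a
      · -- the cycle of M is the 2-cycle (a M)
        have hσ'a2 : σ' a = a := by rw [hσ'a, hMa]
        have hdisj : Equiv.Perm.Disjoint σ' (Equiv.swap a M) := by
          intro y
          rcases eq_or_ne y a with rfl | h1
          · exact Or.inl hσ'a2
          rcases eq_or_ne y M with rfl | h2
          · exact Or.inl hσ'M
          · exact Or.inr (Equiv.swap_apply_of_ne_of_ne h1 h2)
        have hct : σ.cycleType = σ'.cycleType + (Equiv.swap a M).cycleType := by
          rw [← hback]; exact hdisj.cycleType_mul
        have hctsw : Multiset.card (Equiv.swap a M).cycleType = 1 := by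
          rw [(Equiv.Perm.isCycle_swap haM).cycleType]; simp
        have hsupp : σ'.support = σ.support \ {a, M} := by
          ext y
          rcases eq_or_ne y a with rfl | h1
          · simp [Equiv.Perm.mem_support, hσ'a2]
          rcases eq_or_ne y M with rfl | h2
          · simp [Equiv.Perm.mem_support, hσ'M]
          · simp [Equiv.Perm.mem_support, hσ'y y h1 h2, h1, h2]
        have hams : ({a, M} : Finset (Fin d)) ⊆ σ.support := by
          intro y hy
          rcases Finset.mem_insert.1 hy with rfl | hy
          · exact ha_supp
          · rw [Finset.mem_singleton.1 hy]; exact hM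
        have ham2 : ({a, M} : Finset (Fin d)).card = 2 := by
          rw [Finset.card_insert_of_notMem (by simpa using haM), Finset.card_singleton]
        have hcards : σ'.support.card + 2 = σ.support.card := by
          rw [hsupp, Finset.card_sdiff_of_subset hams, ham2]
          have := Finset.card_le_card hams
          omega
        rw [hct, hlength, Multiset.card_add, hctsw]
        omega
      · -- the cycle of M has length at least 3
        have ha_sc : σ.SameCycle M a := ⟨-1, by simp [ha_def]⟩
        set c := σ.cycleOf M with hc_def
        set rest := c⁻¹ * σ with hrest_def
        have hrest_same : ∀ y, σ.SameCycle M y → rest y = y := by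
          intro y hy
          have h1 : c y = σ y := hy.cycleOf_apply
          rw [hrest_def, Equiv.Perm.mul_apply, ← h1, Equiv.Perm.coe_inv, Equiv.symm_apply_apply]
        have hdecomp : c * rest = σ := by
          rw [hrest_def, mul_inv_cancel_left]
        have hdisj : Equiv.Perm.Disjoint c rest := by
          intro y
          by_cases hy : σ.SameCycle M y
          · exact Or.inr (hrest_same y hy)
          · left
            rw [hc_def, Equiv.Perm.cycleOf_apply, if_neg hy]
        have hcM : c M = σ M := σ.cycleOf_apply_self M
        have hca : c a = M := by
          rw [hc_def, ha_sc.cycleOf_apply, hσa]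
        have hcinvM : c⁻¹ M = a := by rw [← hca, Equiv.Perm.coe_inv, Equiv.symm_apply_apply]
        have hccyc : c.IsCycle := Equiv.Perm.isCycle_cycleOf σ (Equiv.Perm.mem_support.1 hM)
        have hC' : (c * Equiv.swap a M).IsCycle := by
          have h1 : c⁻¹ M ≠ M := by rw [hcinvM]; exact haM
          have h2 : c⁻¹ (c⁻¹ M) ≠ M := by
            rw [hcinvM]
            intro hcon
            apply hMa
            rw [← hcM, ← hcon, Equiv.Perm.coe_inv, Equiv.apply_symm_apply]
          have h3 := hccyc.inv.swap_mul h1 h2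
          rw [hcinvM] at h3
          have h4 := h3.inv
          rw [mul_inv_rev, inv_inv, Equiv.swap_inv, Equiv.swap_comm M a] at h4
          exact h4
        have hdisj2 : Equiv.Perm.Disjoint rest (Equiv.swap a M) := by
          intro y
          rcases eq_or_ne y a with rfl | h1
          · exact Or.inl (hrest_same a ha_sc)
          rcases eq_or_ne y M with rfl | h2
          · exact Or.inl (hrest_same M (Equiv.Perm.SameCycle.refl σ M))
          · exact Or.inr (Equiv.swap_apply_of_ne_of_ne h1 h2)
        have hdecomp' : σ' = (c * Equiv.swap a M) * rest := by
          rw [hσ'_def, ← hdecomp, mul_assoc, hdisj2.commute.eq, ← mul_assoc]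
        have hdisj' : Equiv.Perm.Disjoint (c * Equiv.swap a M) rest := by
          intro y
          by_cases hy : σ.SameCycle M y
          · exact Or.inr (hrest_same y hy)
          · left
            have h1 : y ≠ a := by rintro rfl; exact hy ha_sc
            have h2 : y ≠ M := by rintro rfl; exact hy (Equiv.Perm.SameCycle.refl σ M)
            rw [Equiv.Perm.mul_apply, Equiv.swap_apply_of_ne_of_ne h1 h2,
              hc_def, Equiv.Perm.cycleOf_apply, if_neg hy]
        have hctσ : σ.cycleType = c.cycleType + rest.cycleType := by
          rw [← hdecomp]; exact hdisj.cycleType_mul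
        have hctσ' : σ'.cycleType = (c * Equiv.swap a M).cycleType + rest.cycleType := by
          rw [hdecomp']; exact hdisj'.cycleType_mul
        have hcard_eq : Multiset.card σ.cycleType = Multiset.card σ'.cycleType := by
          rw [hctσ, hctσ', hccyc.cycleType, hC'.cycleType]
          simp
        have hsupp : σ'.support = σ.support.erase M := by
          ext y
          rcases eq_or_ne y M with rfl | h2
          · simp [Equiv.Perm.mem_support, hσ'M]
          rcases eq_or_ne y a with rfl | h1
          · simp only [Equiv.Perm.mem_support, hσ'a, Finset.mem_erase]
            exact ⟨fun _ => ⟨haM, Equiv.Perm.mem_support.1 ha_supp⟩, fun _ hcon => hMa hcon⟩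
          · rw [Equiv.Perm.mem_support, hσ'y y h1 h2, Finset.mem_erase,
              Equiv.Perm.mem_support]
            simp [h2]
        have hcards : σ'.support.card + 1 = σ.support.card := by
          rw [hsupp, Finset.card_erase_of_mem hM]
          have := Finset.card_pos.2 ⟨M, hM⟩
          omega
        rw [hlength]
        omega
    · -- uniqueness
      intro L'' hp'' hs''
      rcases L''.eq_nil_or_concat' with rfl | ⟨L₁, y, rfl⟩
      · exfalso
        simp only [List.map_nil, List.prod_nil] at hp''
        rw [← hp''] at hM
        simp at hM
      have hl'' := last_step L₁ y σ hp'' hs''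
      have hyM : colour y = M := by
        have h1 : colour y ≤ M := σ.support.le_max' _ (Equiv.Perm.mem_support.2 (ne_of_lt hl''.2.1))
        have h2 : M ≤ colour y := by
          by_contra hc
          push_neg at hc
          exact Equiv.Perm.mem_support.1 hM (hl''.2.2 M hc)
        exact le_antisymm h1 h2
      have hya : y.1.1 = a := by
        have h2' : y.1.2 = M := hyM
        have := hl''.1
        rw [h2'] at this
        rw [ha_def, ← this, Equiv.Perm.coe_inv, Equiv.symm_apply_apply]
      have hy : y = x₀ := Subtype.ext (Prod.ext hya hyM)
      subst hy
      have hp₁ : (L₁.map stepPerm).prod = σ' := by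
        rw [List.map_append, List.prod_append] at hp''
        simp only [List.map_cons, List.map_nil, List.prod_cons, List.prod_nil, mul_one] at hp''
        have h3 : (L₁.map stepPerm).prod * stepPerm x₀ * Equiv.swap a M = σ * Equiv.swap a M := by
          rw [hp'']
        rw [mul_assoc] at h3
        have hst : stepPerm x₀ * Equiv.swap a M = 1 := by
          simp [stepPerm, hx₀, Equiv.swap_mul_self]
        rw [hst, mul_one] at h3
        rw [h3, hσ'_def]
      have hs₁ : (L₁.map colour).Pairwise (· < ·) := by
        rw [List.map_append] at hs''
        exact (List.pairwise_append.1 hs'').1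
      rw [huniq₀ L₁ hp₁ hs₁]

/-- Every permutation of `S(d)` has a unique strictly monotone factorization into
transpositions, and any such factorization has length `d - c(σ)`. -/
theorem stmt0 (d : ℕ) (σ : Equiv.Perm (Fin d)) :
    (∃! L : List (Step d),
      (L.map stepPerm).prod = σ ∧ (L.map colour).Pairwise (· < ·)) ∧
    (∀ L : List (Step d),
      (L.map stepPerm).prod = σ → (L.map colour).Pairwise (· < ·) →
      L.length = d - cycleCount σ) := by
  obtain ⟨⟨L, hLp, hLs⟩, huniv⟩ := key σ.support.card σ le_rfl
  constructor
  · exact ⟨L, ⟨hLp, hLs⟩, fun L' h => (huniv L' h.1 h.2).2 L hLp hLs⟩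
  · intro L₁ h1 h2
    have hlen := (huniv L₁ h1 h2).1
    have hd : σ.support.card ≤ d := by
      have := Finset.card_le_univ σ.support
      simpa using this
    unfold cycleCount
    omega
end

section
/- The sorting action of the symmetric group S(r) on r-tuples of transpositions (defined by sending the Coxeter generator (i i+1) to R_i) is a well-defined group action, i.e., the assignment π ↦ R_π is a group homomorphism from S(r) to the permutations of the set of r-tuples of transpositions with a fixed product. -/
/-- The product of a tuple of steps, taken in order. -/
def stepProd {d r : ℕ} (W : Fin r → Step d) : Equiv.Perm (Fin d) :=
  (List.ofFn fun j => stepPerm (W j)).prod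

/-- Conjugation of the step `x` by the step `c`, recorded again as a step. -/
def conjStep {d : ℕ} (c x : Step d) : Step d :=
  if h : stepPerm c x.1.1 < stepPerm c x.1.2 then
    ⟨(stepPerm c x.1.1, stepPerm c x.1.2), h⟩
  else
    ⟨(stepPerm c x.1.2, stepPerm c x.1.1),
      lt_of_le_of_ne (not_lt.mp h)
        (fun he => absurd ((stepPerm c).injective he) (ne_of_gt x.2))⟩

/-- The sorting operator `R_i`: swap steps `i` and `i+1`, conjugating the step of
larger colour by the step of smaller colour; do nothing if the colours agree. -/
def Rop {d r : ℕ} (i : ℕ) (h : i + 1 < r) (W : Fin r → Step d) : Fin r → Step d :=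
  let i0 : Fin r := ⟨i, Nat.lt_of_succ_lt h⟩
  let i1 : Fin r := ⟨i + 1, h⟩
  let a := W i0
  let b := W i1
  if colour a < colour b then
    Function.update (Function.update W i0 (conjStep a b)) i1 a
  else if colour b < colour a then
    Function.update (Function.update W i0 b) i1 (conjStep b a)
  else W

/-- The set of `r`-step walks on the transposition Cayley graph of `S(d)` from
`ρ` to `σ`, encoded as tuples of steps with `ρ * (product of steps) = σ`. -/
def Walk (d r : ℕ) (ρ σ : Equiv.Perm (Fin d)) : Type :=
  {W : Fin r → Step d // ρ * stepProd W = σ}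

/-- The spectrum of a walk: the sequence of colours of its steps. -/
def spec {d r : ℕ} {ρ σ : Equiv.Perm (Fin d)} (W : Walk d r ρ σ) : Fin r → Fin d :=
  fun j => colour (W.val j)


-- basic facts
theorem stepPerm_mul_self {d : ℕ} (x : Step d) : stepPerm x * stepPerm x = 1 :=
  Equiv.swap_mul_self _ _

theorem stepPerm_injective {d : ℕ} : Function.Injective (stepPerm (d := d)) := by
  rintro ⟨⟨a, b⟩, hab⟩ ⟨⟨c, e⟩, hce⟩ h
  have hab' : a < b := hab
  have hce' : c < e := hce
  simp only [stepPerm] at h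
  have hb : b = Equiv.swap c e a := by rw [← h, Equiv.swap_apply_left]
  rcases eq_or_ne a c with rfl | hac
  · rw [Equiv.swap_apply_left] at hb
    subst hb; rfl
  · exfalso
    rcases eq_or_ne a e with rfl | hae
    · rw [Equiv.swap_apply_right] at hb
      subst hb
      exact lt_asymm hab' hce'
    · rw [Equiv.swap_apply_of_ne_of_ne hac hae] at hb
      subst hb
      exact lt_irrefl _ hab'

theorem stepPerm_conjStep {d : ℕ} (c x : Step d) :
    stepPerm (conjStep c x) = stepPerm c * stepPerm x * stepPerm c := by
  have key : stepPerm c * stepPerm x * stepPerm c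
      = Equiv.swap (stepPerm c x.1.1) (stepPerm c x.1.2) := by
    simp only [stepPerm]
    rw [Equiv.swap_apply_apply, Equiv.swap_inv]
  by_cases hc : stepPerm c x.1.1 < stepPerm c x.1.2
  · rw [show conjStep c x = ⟨(stepPerm c x.1.1, stepPerm c x.1.2), hc⟩ from dif_pos hc]
    rw [key]; rfl
  · rw [show conjStep c x = ⟨(stepPerm c x.1.2, stepPerm c x.1.1),
      lt_of_le_of_ne (not_lt.mp hc)
        (fun he => absurd ((stepPerm c).injective he) (ne_of_gt x.2))⟩ from dif_neg hc]
    rw [key]; exact (Equiv.swap_comm _ _)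

theorem colour_conjStep {d : ℕ} {c x : Step d} (h : colour c < colour x) :
    colour (conjStep c x) = colour x := by
  have hfix : stepPerm c x.1.2 = x.1.2 := by
    apply Equiv.swap_apply_of_ne_of_ne
    · exact ne_of_gt (lt_trans c.2 h)
    · exact ne_of_gt h
  have h1 : stepPerm c x.1.1 < stepPerm c x.1.2 := by
    rw [hfix]
    rcases eq_or_ne x.1.1 c.1.1 with he | hne1
    · simp only [stepPerm]; rw [he, Equiv.swap_apply_left]; exact h
    · rcases eq_or_ne x.1.1 c.1.2 with he2 | hne2
      · simp only [stepPerm]; rw [he2, Equiv.swap_apply_right]; exact lt_trans c.2 h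
      · simp only [stepPerm]; rw [Equiv.swap_apply_of_ne_of_ne hne1 hne2]; exact x.2
  rw [show conjStep c x = ⟨(stepPerm c x.1.1, stepPerm c x.1.2), h1⟩ from dif_pos h1, colour]
  exact hfix


theorem stepPerm_mul_self_mul {d : ℕ} (c : Step d) (p : Equiv.Perm (Fin d)) :
    stepPerm c * (stepPerm c * p) = p := by
  rw [← mul_assoc, stepPerm_mul_self, one_mul]

theorem conjStep_conjStep {d : ℕ} (c x : Step d) : conjStep c (conjStep c x) = x := by
  apply stepPerm_injective
  simp [stepPerm_conjStep, mul_assoc, stepPerm_mul_self_mul, stepPerm_mul_self]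

theorem conjStep_conjStep_eq {d : ℕ} (a b c : Step d) :
    conjStep (conjStep a b) (conjStep a c) = conjStep a (conjStep b c) := by
  apply stepPerm_injective
  simp [stepPerm_conjStep, mul_assoc, stepPerm_mul_self_mul, stepPerm_mul_self]

/-- The basic sorting operation on a pair of steps. -/
def Tpair {d : ℕ} (a b : Step d) : Step d × Step d :=
  if colour a < colour b then (conjStep a b, a)
  else if colour b < colour a then (b, conjStep b a)
  else (a, b)

theorem Tpair_lt {d : ℕ} {a b : Step d} (h : colour a < colour b) :
    Tpair a b = (conjStep a b, a) := by rw [Tpair, if_pos h]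

theorem Tpair_gt {d : ℕ} {a b : Step d} (h : colour b < colour a) :
    Tpair a b = (b, conjStep b a) := by
  rw [Tpair, if_neg (lt_asymm h), if_pos h]

theorem Tpair_eq {d : ℕ} {a b : Step d} (h : colour a = colour b) :
    Tpair a b = (a, b) := by
  rw [Tpair, if_neg (by rw [h]; exact lt_irrefl _), if_neg (by rw [h]; exact lt_irrefl _)]

theorem Tpair_perm_mul {d : ℕ} (a b : Step d) :
    stepPerm (Tpair a b).1 * stepPerm (Tpair a b).2 = stepPerm a * stepPerm b := by
  rw [Tpair]
  split
  · simp [stepPerm_conjStep, mul_assoc, stepPerm_mul_self_mul, stepPerm_mul_self]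
  · split
    · simp [stepPerm_conjStep, mul_assoc, stepPerm_mul_self_mul, stepPerm_mul_self]
    · rfl

theorem Tpair_colour_1 {d : ℕ} (a b : Step d) : colour (Tpair a b).1 = colour b := by
  rcases lt_trichotomy (colour a) (colour b) with h | h | h
  · rw [Tpair_lt h, colour_conjStep h]
  · rw [Tpair_eq h, h]
  · rw [Tpair_gt h]

theorem Tpair_colour_2 {d : ℕ} (a b : Step d) : colour (Tpair a b).2 = colour a := by
  rcases lt_trichotomy (colour a) (colour b) with h | h | h
  · rw [Tpair_lt h]
  · rw [Tpair_eq h, h]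
  · rw [Tpair_gt h, colour_conjStep h]

theorem Tpair_Tpair {d : ℕ} (a b : Step d) :
    Tpair (Tpair a b).1 (Tpair a b).2 = (a, b) := by
  rcases lt_trichotomy (colour a) (colour b) with h | h | h
  · rw [Tpair_lt h]
    rw [Tpair_gt (show colour (a : Step d) < colour (conjStep a b) from (colour_conjStep h).symm ▸ h)]
    rw [conjStep_conjStep]
  · rw [Tpair_eq h, Tpair_eq h]
  · rw [Tpair_gt h]
    rw [Tpair_lt (show colour (b : Step d) < colour (conjStep b a) from (colour_conjStep h).symm ▸ h)]
    rw [conjStep_conjStep]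

theorem conjStep_sandwich {d : ℕ} (b a c : Step d) :
    conjStep b (conjStep (conjStep b a) c) = conjStep a (conjStep b c) := by
  apply stepPerm_injective
  simp [stepPerm_conjStep, mul_assoc, stepPerm_mul_self_mul, stepPerm_mul_self]

theorem Tbraid {d : ℕ} (a b c : Step d) :
    ((Tpair (Tpair a b).1 (Tpair (Tpair a b).2 c).1).1,
     (Tpair (Tpair a b).1 (Tpair (Tpair a b).2 c).1).2,
     (Tpair (Tpair a b).2 c).2)
    =
    ((Tpair a (Tpair b c).1).1,
     (Tpair (Tpair a (Tpair b c).1).2 (Tpair b c).2).1,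
     (Tpair (Tpair a (Tpair b c).1).2 (Tpair b c).2).2) := by
  rcases lt_trichotomy (colour a) (colour b) with hxy | hxy | hxy
  · rcases lt_trichotomy (colour b) (colour c) with hyz | hyz | hyz
    · -- case 8 : x < y < z
      have hxz : colour a < colour c := hxy.trans hyz
      rw [Tpair_lt hxy]
      rw [Tpair_lt hxz]
      rw [Tpair_lt (show colour (conjStep a b) < colour (conjStep a c) by
        rw [colour_conjStep hxy, colour_conjStep hxz]; exact hyz)]
      rw [Tpair_lt hyz]
      rw [Tpair_lt (show colour a < colour (conjStep b c) by
        rw [colour_conjStep hyz]; exact hxz)]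
      rw [Tpair_lt hxy, conjStep_conjStep_eq]
    · -- case 4 : x < y = z
      have hxz : colour a < colour c := hyz ▸ hxy
      rw [Tpair_lt hxy, Tpair_lt hxz]
      rw [Tpair_eq (show colour (conjStep a b) = colour (conjStep a c) by
        rw [colour_conjStep hxy, colour_conjStep hxz]; exact hyz)]
      rw [Tpair_eq hyz, Tpair_lt hxy, Tpair_lt hxz]
    · rcases lt_trichotomy (colour a) (colour c) with hxz | hxz | hxz
      · -- case 9 : x < z < y
        rw [Tpair_lt hxy, Tpair_lt hxz]
        rw [Tpair_gt (show colour (conjStep a c) < colour (conjStep a b) by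
          rw [colour_conjStep hxy, colour_conjStep hxz]; exact hyz)]
        rw [Tpair_gt hyz, Tpair_lt hxz]
        rw [Tpair_lt (show colour a < colour (conjStep c b) by
          rw [colour_conjStep hyz]; exact hxy)]
        rw [conjStep_conjStep_eq]
      · -- case 7 : x = z < y
        rw [Tpair_lt hxy, Tpair_eq hxz]
        rw [Tpair_gt (show colour a < colour (conjStep a b) by
          rw [colour_conjStep hxy]; exact hxy)]
        rw [conjStep_conjStep]
        rw [Tpair_gt hyz, Tpair_eq hxz]
        rw [Tpair_lt (show colour c < colour (conjStep c b) by
          rw [colour_conjStep hyz]; exact hyz)]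
        rw [conjStep_conjStep]
      · -- case 12 : z < x < y
        rw [Tpair_lt hxy, Tpair_gt hxz]
        rw [Tpair_gt (show colour c < colour (conjStep a b) by
          rw [colour_conjStep hxy]; exact hyz)]
        rw [Tpair_gt hyz, Tpair_gt hxz]
        rw [Tpair_lt (show colour (conjStep c a) < colour (conjStep c b) by
          rw [colour_conjStep hxz, colour_conjStep hyz]; exact hxy)]
        rw [conjStep_conjStep_eq]
  · rcases lt_trichotomy (colour b) (colour c) with hyz | hyz | hyz
    · -- case 2 : x = y < z
      have hxz : colour a < colour c := hxy ▸ hyz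
      rw [Tpair_eq hxy, Tpair_lt hyz]
      rw [Tpair_lt (show colour a < colour (conjStep b c) by
        rw [colour_conjStep hyz]; exact hxz)]
      rw [Tpair_eq hxy]
    · -- case 1 : x = y = z
      rw [Tpair_eq hxy, Tpair_eq hyz, Tpair_eq hxy, Tpair_eq hyz]
    · -- case 3 : x = y > z
      have hxz : colour c < colour a := hxy ▸ hyz
      rw [Tpair_eq hxy, Tpair_gt hyz, Tpair_gt hxz]
      rw [Tpair_eq (show colour (conjStep c a) = colour (conjStep c b) by
        rw [colour_conjStep hxz, colour_conjStep hyz]; exact hxy)]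
  · rcases lt_trichotomy (colour b) (colour c) with hyz | hyz | hyz
    · rcases lt_trichotomy (colour a) (colour c) with hxz | hxz | hxz
      · -- case 10 : y < x < z
        rw [Tpair_gt hxy]
        rw [Tpair_lt (show colour (conjStep b a) < colour c by
          rw [colour_conjStep hxy]; exact hxz)]
        rw [Tpair_lt (show colour b < colour (conjStep (conjStep b a) c) by
          rw [colour_conjStep (show colour (conjStep b a) < colour c by
            rw [colour_conjStep hxy]; exact hxz)]; exact hyz)]
        rw [Tpair_lt hyz]
        rw [Tpair_lt (show colour a < colour (conjStep b c) by
          rw [colour_conjStep hyz]; exact hxz)]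
        rw [Tpair_gt hxy, conjStep_sandwich]
      · -- case 6 : y < x = z
        rw [Tpair_gt hxy]
        rw [Tpair_eq (show colour (conjStep b a) = colour c by
          rw [colour_conjStep hxy]; exact hxz)]
        rw [Tpair_lt (show colour b < colour (conjStep b a) by
          rw [colour_conjStep hxy]; exact hxy)]
        rw [conjStep_conjStep]
        rw [Tpair_lt hyz]
        rw [Tpair_eq (show colour a = colour (conjStep b c) by
          rw [colour_conjStep hyz]; exact hxz)]
        rw [Tpair_gt (show colour b < colour (conjStep b c) by
          rw [colour_conjStep hyz]; exact hyz)]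
        rw [conjStep_conjStep]
      · -- case 11 : y < z < x
        rw [Tpair_gt hxy]
        rw [Tpair_gt (show colour c < colour (conjStep b a) by
          rw [colour_conjStep hxy]; exact hxz)]
        rw [Tpair_lt hyz]
        rw [Tpair_gt (show colour (conjStep b c) < colour a by
          rw [colour_conjStep hyz]; exact hxz)]
        rw [Tpair_gt (show colour b < colour (conjStep (conjStep b c) a) by
          rw [colour_conjStep (show colour (conjStep b c) < colour a by
            rw [colour_conjStep hyz]; exact hxz)]; exact hxy)]
        rw [conjStep_sandwich]
    · -- case 5 : y = z, x > y
      have hzx : colour c < colour a := hyz ▸ hxy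
      rw [Tpair_gt hxy]
      rw [Tpair_gt (show colour c < colour (conjStep b a) by
        rw [colour_conjStep hxy]; exact hzx)]
      rw [Tpair_eq hyz]
      rw [Tpair_gt hxy]
      rw [Tpair_gt (show colour c < colour (conjStep b a) by
        rw [colour_conjStep hxy]; exact hzx)]
    · -- case 13 : z < y < x
      have hzx : colour c < colour a := hyz.trans hxy
      rw [Tpair_gt hxy]
      rw [Tpair_gt (show colour c < colour (conjStep b a) by
        rw [colour_conjStep hxy]; exact hzx)]
      rw [Tpair_gt hyz, Tpair_gt hzx]
      rw [Tpair_gt (show colour (conjStep c b) < colour (conjStep c a) by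
        rw [colour_conjStep hyz, colour_conjStep hzx]; exact hxy)]
      rw [conjStep_conjStep_eq]

theorem Rop_apply {d r : ℕ} (i : ℕ) (h : i + 1 < r) (W : Fin r → Step d) (j : Fin r) :
    Rop i h W j =
      if j = (⟨i, Nat.lt_of_succ_lt h⟩ : Fin r) then
        (Tpair (W ⟨i, Nat.lt_of_succ_lt h⟩) (W ⟨i + 1, h⟩)).1
      else if j = (⟨i + 1, h⟩ : Fin r) then
        (Tpair (W ⟨i, Nat.lt_of_succ_lt h⟩) (W ⟨i + 1, h⟩)).2
      else W j := by
  set i0 : Fin r := ⟨i, Nat.lt_of_succ_lt h⟩ with hi0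
  set i1 : Fin r := ⟨i + 1, h⟩ with hi1
  have hne : i0 ≠ i1 := by simp [hi0, hi1, Fin.ext_iff]
  rcases lt_trichotomy (colour (W i0)) (colour (W i1)) with hc | hc | hc
  · rw [Rop]
    rw [if_pos hc, Tpair_lt hc]
    rcases eq_or_ne j i0 with rfl | hj0
    · rw [Function.update_of_ne hne, Function.update_self, if_pos rfl]
    · rcases eq_or_ne j i1 with rfl | hj1
      · rw [Function.update_self, if_neg hne.symm, if_pos rfl]
      · rw [Function.update_of_ne hj1, Function.update_of_ne hj0, if_neg hj0, if_neg hj1]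
  · rw [Rop]
    rw [if_neg (by rw [hc]; exact lt_irrefl _), if_neg (by rw [hc]; exact lt_irrefl _),
      Tpair_eq hc]
    split_ifs with h1 h2
    · subst h1; rfl
    · subst h2; rfl
    · rfl
  · rw [Rop]
    rw [if_neg (lt_asymm hc), if_pos hc, Tpair_gt hc]
    rcases eq_or_ne j i0 with rfl | hj0
    · rw [Function.update_of_ne hne, Function.update_self, if_pos rfl]
    · rcases eq_or_ne j i1 with rfl | hj1
      · rw [Function.update_self, if_neg hne.symm, if_pos rfl]
      · rw [Function.update_of_ne hj1, Function.update_of_ne hj0, if_neg hj0, if_neg hj1]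

theorem prod_ofFn_local {M : Type*} [Monoid M] :
    ∀ (i : ℕ) {r : ℕ} (h : i + 1 < r) (f g : Fin r → M),
      (∀ j : Fin r, j.val ≠ i → j.val ≠ i + 1 → f j = g j) →
      f ⟨i, Nat.lt_of_succ_lt h⟩ * f ⟨i + 1, h⟩ = g ⟨i, Nat.lt_of_succ_lt h⟩ * g ⟨i + 1, h⟩ →
      (List.ofFn f).prod = (List.ofFn g).prod := by
  intro i
  induction i with
  | zero =>
    intro r h f g hagree hprod
    match r, h with
    | r'' + 2, h =>
      rw [List.ofFn_succ, List.ofFn_succ, List.prod_cons, List.prod_cons,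
        List.ofFn_succ, List.ofFn_succ, List.prod_cons, List.prod_cons,
        ← mul_assoc, ← mul_assoc]
      have h0 : (0 : Fin (r'' + 2)) = ⟨0, Nat.lt_of_succ_lt h⟩ := by simp [Fin.ext_iff]
      have h1 : (Fin.succ 0 : Fin (r'' + 2)) = ⟨1, h⟩ := by simp [Fin.ext_iff]
      rw [h0, h1] at *
      rw [hprod]
      congr 1
      have : (fun i : Fin r'' => f i.succ.succ) = fun i => g i.succ.succ := by
        funext j
        exact hagree _ (by simp [Fin.val_succ]) (by simp [Fin.val_succ])
      rw [this]
  | succ i' IH =>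
    intro r h f g hagree hprod
    match r, h with
    | r' + 1, h =>
      rw [List.ofFn_succ, List.ofFn_succ, List.prod_cons, List.prod_cons]
      rw [hagree 0 (by simp) (by simp)]
      congr 1
      apply IH (by omega)
      · intro j hj1 hj2
        exact hagree j.succ (by simp [Fin.ext_iff, Fin.val_succ]; omega)
          (by simp [Fin.ext_iff, Fin.val_succ]; omega)
      · have e0 : (Fin.succ ⟨i', by omega⟩ : Fin (r' + 1)) = ⟨i' + 1, by omega⟩ := by
          simp [Fin.ext_iff]
        have e1 : (Fin.succ ⟨i' + 1, by omega⟩ : Fin (r' + 1)) = ⟨i' + 2, h⟩ := by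
          simp [Fin.ext_iff]
        simp only [e0, e1]
        exact hprod

theorem stepProd_Rop {d r : ℕ} (i : ℕ) (h : i + 1 < r) (W : Fin r → Step d) :
    stepProd (Rop i h W) = stepProd W := by
  have hne : (⟨i, Nat.lt_of_succ_lt h⟩ : Fin r) ≠ ⟨i + 1, h⟩ := by simp [Fin.ext_iff]
  rw [stepProd, stepProd]
  apply prod_ofFn_local i h
  · intro j hj1 hj2
    rw [Rop_apply, if_neg (by simp [Fin.ext_iff]; exact hj1),
      if_neg (by simp [Fin.ext_iff]; exact hj2)]
  · rw [Rop_apply, Rop_apply, if_pos rfl, if_neg hne.symm, if_pos rfl, Tpair_perm_mul]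

theorem Rop_Rop {d r : ℕ} (i : ℕ) (h : i + 1 < r) (W : Fin r → Step d) :
    Rop i h (Rop i h W) = W := by
  have hne : (⟨i, Nat.lt_of_succ_lt h⟩ : Fin r) ≠ ⟨i + 1, h⟩ := by simp [Fin.ext_iff]
  have hP := Tpair_Tpair (W ⟨i, Nat.lt_of_succ_lt h⟩) (W ⟨i + 1, h⟩)
  funext j
  rw [Rop_apply, Rop_apply, Rop_apply, if_pos rfl, if_neg hne.symm, if_pos rfl, hP]
  split_ifs with h1 h2
  · subst h1; rfl
  · subst h2; rfl
  · rw [Rop_apply, if_neg h1, if_neg h2]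

theorem Rop_apply_ne {d r : ℕ} {i : ℕ} (h : i + 1 < r) (W : Fin r → Step d) {j : Fin r}
    (hj1 : j.val ≠ i) (hj2 : j.val ≠ i + 1) : Rop i h W j = W j := by
  rw [Rop_apply, if_neg (by simp [Fin.ext_iff]; exact hj1),
    if_neg (by simp [Fin.ext_iff]; exact hj2)]

theorem Rop_apply_fst {d r : ℕ} {i : ℕ} (h : i + 1 < r) (W : Fin r → Step d) :
    Rop i h W ⟨i, Nat.lt_of_succ_lt h⟩ = (Tpair (W ⟨i, Nat.lt_of_succ_lt h⟩) (W ⟨i + 1, h⟩)).1 := by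
  rw [Rop_apply, if_pos rfl]

theorem Rop_apply_snd {d r : ℕ} {i : ℕ} (h : i + 1 < r) (W : Fin r → Step d) :
    Rop i h W ⟨i + 1, h⟩ = (Tpair (W ⟨i, Nat.lt_of_succ_lt h⟩) (W ⟨i + 1, h⟩)).2 := by
  rw [Rop_apply, if_neg (by simp [Fin.ext_iff]), if_pos rfl]

theorem Rop_comm {d r : ℕ} (i j : ℕ) (hij : i + 1 < j) (hj : j + 1 < r)
    (W : Fin r → Step d) :
    Rop i (by omega) (Rop j hj W) = Rop j hj (Rop i (by omega) W) := by
  have hi : i + 1 < r := by omega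
  funext k
  by_cases hk0 : k = (⟨i, by omega⟩ : Fin r)
  · subst hk0
    rw [Rop_apply_fst hi, Rop_apply_ne hj _ (by simp; omega) (by simp; omega),
      Rop_apply_ne hj _ (by simp; omega) (by simp; omega),
      Rop_apply_ne hj _ (by simp; omega) (by simp; omega), Rop_apply_fst hi]
  · by_cases hk1 : k = (⟨i + 1, by omega⟩ : Fin r)
    · subst hk1
      rw [Rop_apply_snd hi, Rop_apply_ne hj _ (by simp; omega) (by simp; omega),
        Rop_apply_ne hj _ (by simp; omega) (by simp; omega),
        Rop_apply_ne hj _ (by simp; omega) (by simp; omega), Rop_apply_snd hi]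
    · by_cases hk2 : k = (⟨j, by omega⟩ : Fin r)
      · subst hk2
        have L : Rop i hi (Rop j hj W) ⟨j, by omega⟩
            = (Tpair (W ⟨j, Nat.lt_of_succ_lt hj⟩) (W ⟨j + 1, hj⟩)).1 := by
          rw [Rop_apply_ne hi (Rop j hj W) (by simp; omega) (by simp; omega)]
          exact Rop_apply_fst hj W
        have Rr : Rop j hj (Rop i hi W) ⟨j, by omega⟩
            = (Tpair (Rop i hi W ⟨j, Nat.lt_of_succ_lt hj⟩) (Rop i hi W ⟨j + 1, hj⟩)).1 :=
          Rop_apply_fst hj _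
        rw [L, Rr, Rop_apply_ne hi W (by simp; omega) (by simp; omega),
          Rop_apply_ne hi W (by simp; omega) (by simp; omega)]
      · by_cases hk3 : k = (⟨j + 1, hj⟩ : Fin r)
        · subst hk3
          have L : Rop i hi (Rop j hj W) ⟨j + 1, hj⟩
              = (Tpair (W ⟨j, Nat.lt_of_succ_lt hj⟩) (W ⟨j + 1, hj⟩)).2 := by
            rw [Rop_apply_ne hi (Rop j hj W) (by simp; omega) (by simp; omega)]
            exact Rop_apply_snd hj W
          have Rr : Rop j hj (Rop i hi W) ⟨j + 1, hj⟩
              = (Tpair (Rop i hi W ⟨j, Nat.lt_of_succ_lt hj⟩) (Rop i hi W ⟨j + 1, hj⟩)).2 :=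
            Rop_apply_snd hj _
          rw [L, Rr, Rop_apply_ne hi W (by simp; omega) (by simp; omega),
            Rop_apply_ne hi W (by simp; omega) (by simp; omega)]
        · have hv0 : k.val ≠ i := fun hh => hk0 (by simp [Fin.ext_iff, hh])
          have hv1 : k.val ≠ i + 1 := fun hh => hk1 (by simp [Fin.ext_iff, hh])
          have hv2 : k.val ≠ j := fun hh => hk2 (by simp [Fin.ext_iff, hh])
          have hv3 : k.val ≠ j + 1 := fun hh => hk3 (by simp [Fin.ext_iff, hh])
          rw [Rop_apply_ne hi _ hv0 hv1, Rop_apply_ne hj _ hv2 hv3,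
            Rop_apply_ne hj _ hv2 hv3, Rop_apply_ne hi _ hv0 hv1]

theorem Rop_braid {d r : ℕ} (i : ℕ) (h2 : i + 1 + 1 < r) (W : Fin r → Step d) :
    Rop i (by omega) (Rop (i + 1) h2 (Rop i (by omega) W))
      = Rop (i + 1) h2 (Rop i (by omega) (Rop (i + 1) h2 W)) := by
  have hi : i + 1 < r := by omega
  have HB := Tbraid (W ⟨i, Nat.lt_of_succ_lt hi⟩) (W ⟨i + 1, hi⟩) (W ⟨i + 1 + 1, h2⟩)
  have HB1 := congrArg (fun p : Step d × Step d × Step d => p.1) HB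
  have HB2 := congrArg (fun p : Step d × Step d × Step d => p.2.1) HB
  have HB3 := congrArg (fun p : Step d × Step d × Step d => p.2.2) HB
  simp only [] at HB1 HB2 HB3
  funext k
  by_cases hk0 : k = (⟨i, by omega⟩ : Fin r)
  · subst hk0
    rw [Rop_apply_fst hi (Rop (i + 1) h2 (Rop i hi W)),
      Rop_apply_ne h2 (Rop i hi W) (by simp <;> omega) (by simp <;> omega),
      Rop_apply_fst hi W,
      Rop_apply_fst h2 (Rop i hi W),
      Rop_apply_snd hi W,
      Rop_apply_ne hi W (by simp <;> omega) (by simp <;> omega),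
      Rop_apply_ne h2 (Rop i hi (Rop (i + 1) h2 W)) (by simp <;> omega) (by simp <;> omega),
      Rop_apply_fst hi (Rop (i + 1) h2 W),
      Rop_apply_ne h2 W (by simp <;> omega) (by simp <;> omega),
      Rop_apply_fst h2 W]
    exact HB1
  · by_cases hk1 : k = (⟨i + 1, by omega⟩ : Fin r)
    · subst hk1
      rw [Rop_apply_snd hi (Rop (i + 1) h2 (Rop i hi W)),
        Rop_apply_ne h2 (Rop i hi W) (by simp <;> omega) (by simp <;> omega),
        Rop_apply_fst hi W,
        Rop_apply_fst h2 (Rop i hi W),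
        Rop_apply_snd hi W,
        Rop_apply_ne hi W (by simp <;> omega) (by simp <;> omega),
        Rop_apply_fst h2 (Rop i hi (Rop (i + 1) h2 W)),
        Rop_apply_snd hi (Rop (i + 1) h2 W),
        Rop_apply_ne h2 W (by simp <;> omega) (by simp <;> omega),
        Rop_apply_fst h2 W,
        Rop_apply_ne hi (Rop (i + 1) h2 W) (by simp <;> omega) (by simp <;> omega),
        Rop_apply_snd h2 W]
      exact HB2
    · by_cases hk2 : k = (⟨i + 1 + 1, h2⟩ : Fin r)
      · subst hk2
        rw [Rop_apply_ne hi (Rop (i + 1) h2 (Rop i hi W)) (by simp <;> omega) (by simp <;> omega),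
          Rop_apply_snd h2 (Rop i hi W),
          Rop_apply_snd hi W,
          Rop_apply_ne hi W (by simp <;> omega) (by simp <;> omega),
          Rop_apply_snd h2 (Rop i hi (Rop (i + 1) h2 W)),
          Rop_apply_snd hi (Rop (i + 1) h2 W),
          Rop_apply_ne h2 W (by simp <;> omega) (by simp <;> omega),
          Rop_apply_fst h2 W,
          Rop_apply_ne hi (Rop (i + 1) h2 W) (by simp <;> omega) (by simp <;> omega),
          Rop_apply_snd h2 W]
        exact HB3
      · have hv0 : k.val ≠ i := fun hh => hk0 (by simp [Fin.ext_iff, hh])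
        have hv1 : k.val ≠ i + 1 := fun hh => hk1 (by simp [Fin.ext_iff, hh])
        have hv2 : k.val ≠ i + 1 + 1 := fun hh => hk2 (by simp [Fin.ext_iff, hh])
        rw [Rop_apply_ne hi (Rop (i + 1) h2 (Rop i hi W)) hv0 hv1,
          Rop_apply_ne h2 (Rop i hi W) hv1 hv2,
          Rop_apply_ne hi W hv0 hv1,
          Rop_apply_ne h2 (Rop i hi (Rop (i + 1) h2 W)) hv1 hv2,
          Rop_apply_ne hi (Rop (i + 1) h2 W) hv0 hv1,
          Rop_apply_ne h2 W hv1 hv2]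

section Lift
open Equiv

variable {G : Type*} [Group G]

/-- The word `s (k-1) * ⋯ * s 1 * s 0`. -/
def wordV (s : ℕ → G) : ℕ → G
  | 0 => 1
  | k + 1 => s k * wordV s k

variable {m : ℕ}

/-- Extend a permutation of `Fin m` to one of `Fin (m+1)` fixing `0`. -/
def extPerm (ρ : Perm (Fin m)) : Perm (Fin (m + 1)) where
  toFun x := Fin.cases 0 (fun i => (ρ i).succ) x
  invFun x := Fin.cases 0 (fun i => (ρ⁻¹ i).succ) x
  left_inv x := by
    cases x using Fin.cases with
    | zero => simp
    | succ i => simp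
  right_inv x := by
    cases x using Fin.cases with
    | zero => simp
    | succ i => simp

@[simp] theorem extPerm_zero (ρ : Perm (Fin m)) : extPerm ρ 0 = 0 := rfl

@[simp] theorem extPerm_succ (ρ : Perm (Fin m)) (i : Fin m) :
    extPerm ρ i.succ = (ρ i).succ := by
  show Fin.cases (motive := fun _ => Fin (m+1)) 0 (fun i => (ρ i).succ) i.succ = (ρ i).succ
  simp

theorem extPerm_mul (ρ τ : Perm (Fin m)) :
    extPerm (ρ * τ) = extPerm ρ * extPerm τ := by
  apply Equiv.ext
  intro x
  cases x using Fin.cases with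
  | zero => simp [Perm.mul_apply]
  | succ i => simp [Perm.mul_apply]

theorem extPerm_one : extPerm (1 : Perm (Fin m)) = 1 := by
  apply Equiv.ext
  intro x
  cases x using Fin.cases with
  | zero => simp
  | succ i => simp

theorem extPerm_swap (a b : Fin m) :
    extPerm (Equiv.swap a b) = Equiv.swap a.succ b.succ := by
  apply Equiv.ext
  intro x
  cases x using Fin.cases with
  | zero =>
    rw [extPerm_zero, Equiv.swap_apply_of_ne_of_ne (Fin.succ_ne_zero a).symm
      (Fin.succ_ne_zero b).symm]
  | succ i =>
    rw [extPerm_succ]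
    rcases eq_or_ne i a with rfl | hia
    · rw [Equiv.swap_apply_left, Equiv.swap_apply_left]
    · rcases eq_or_ne i b with rfl | hib
      · rw [Equiv.swap_apply_right, Equiv.swap_apply_right]
      · rw [Equiv.swap_apply_of_ne_of_ne hia hib,
          Equiv.swap_apply_of_ne_of_ne (fun hh => hia (Fin.succ_injective _ hh))
            (fun hh => hib (Fin.succ_injective _ hh))]

/-- Restrict a permutation of `Fin (m+1)` fixing `0` to `Fin m`. -/
def shrink (π : Perm (Fin (m + 1))) (hπ : π 0 = 0) : Perm (Fin m) where
  toFun i := (π i.succ).pred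
    (fun hc => Fin.succ_ne_zero i (π.injective (hc.trans hπ.symm)))
  invFun i := (π⁻¹ i.succ).pred
    (fun hc => Fin.succ_ne_zero i
      (by have := congrArg π hc; rwa [← Perm.mul_apply, mul_inv_cancel, Perm.one_apply, hπ] at this))
  left_inv i := by simp
  right_inv i := by simp

theorem ext_shrink (π : Perm (Fin (m + 1))) (hπ : π 0 = 0) :
    extPerm (shrink π hπ) = π := by
  apply Equiv.ext
  intro x
  cases x using Fin.cases with
  | zero => rw [extPerm_zero, hπ]
  | succ i =>
    rw [extPerm_succ]
    simp [shrink]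

theorem extPerm_injective : Function.Injective (extPerm (m := m)) := by
  intro ρ τ hh
  apply Equiv.ext
  intro i
  have := congrArg (fun σ : Perm (Fin (m+1)) => σ i.succ) hh
  simpa using this

theorem shrink_eq {π : Perm (Fin (m + 1))} {ρ : Perm (Fin m)}
    (hext : extPerm ρ = π) (h : π 0 = 0) : shrink π h = ρ := by
  apply extPerm_injective
  rw [ext_shrink, hext]

theorem swap_mul_inv {α : Type*} [DecidableEq α] (σ : Perm α) (a b : α) :
    Equiv.swap a b * σ⁻¹ = σ⁻¹ * Equiv.swap (σ a) (σ b) := by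
  rw [Equiv.swap_apply_apply]
  group

theorem cycleRange_succ_mk (i : ℕ) (h : i + 1 < m + 1) :
    Fin.cycleRange (⟨i + 1, h⟩ : Fin (m + 1)) =
      Fin.cycleRange ⟨i, Nat.lt_of_succ_lt h⟩ *
        Equiv.swap ⟨i, Nat.lt_of_succ_lt h⟩ ⟨i + 1, h⟩ := by
  apply Equiv.ext
  intro j
  rcases j with ⟨jv, hj⟩
  rw [Perm.mul_apply]
  rcases lt_trichotomy jv i with hlt | rfl | hgt
  · rw [Equiv.swap_apply_of_ne_of_ne (by simp [Fin.ext_iff]; omega)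
      (by simp [Fin.ext_iff]; omega),
      Fin.cycleRange_of_lt (by simp [Fin.lt_def]; omega),
      Fin.cycleRange_of_lt (by simp [Fin.lt_def]; omega)]
  · rw [show (⟨jv, hj⟩ : Fin (m+1)) = ⟨jv, Nat.lt_of_succ_lt h⟩ from rfl,
      Equiv.swap_apply_left,
      Fin.cycleRange_of_lt (by simp [Fin.lt_def]),
      Fin.cycleRange_of_gt (by simp [Fin.lt_def])]
    apply Fin.ext
    rw [Fin.val_add_one_of_lt (by simp [Fin.lt_def, Fin.last]; omega)]
  · rcases Nat.eq_or_lt_of_le hgt with heq | hgt2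
    · rw [show (⟨jv, hj⟩ : Fin (m+1)) = ⟨i + 1, h⟩ from by simp [Fin.ext_iff]; omega,
        Equiv.swap_apply_right,
        Fin.cycleRange_of_eq rfl,
        Fin.cycleRange_of_eq rfl]
    · rw [Equiv.swap_apply_of_ne_of_ne (by simp [Fin.ext_iff]; omega)
        (by simp [Fin.ext_iff]; omega),
        Fin.cycleRange_of_gt (by simp [Fin.lt_def]; omega),
        Fin.cycleRange_of_gt (by simp [Fin.lt_def]; omega)]

theorem wordV_comm (s : ℕ → G) (n : ℕ)
    (hcm : ∀ i j, i + 1 < j → j + 1 < n → s i * s j = s j * s i)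
    (t j : ℕ) (htj : t < j) (hj : j + 1 < n) :
    wordV s t * s j = s j * wordV s t := by
  induction t with
  | zero => rw [wordV, one_mul, mul_one]
  | succ t ih =>
    rw [wordV, mul_assoc, ih (by omega), ← mul_assoc, hcm t j (by omega) hj, mul_assoc]

theorem wordV_braid (s : ℕ → G) (n : ℕ)
    (hbr : ∀ i, i + 1 + 1 < n → s i * s (i + 1) * s i = s (i + 1) * s i * s (i + 1))
    (hcm : ∀ i j, i + 1 < j → j + 1 < n → s i * s j = s j * s i) :
    ∀ kv i, i + 1 < kv → kv < n → wordV s kv * s (i + 1) = s i * wordV s kv := by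
  intro kv
  induction kv with
  | zero => intro i h1 _; exact absurd h1 (by omega)
  | succ t ih =>
    intro i h1 h2
    rcases Nat.lt_or_ge (i + 1) t with hlt | hge
    · rw [wordV, mul_assoc, ih i hlt (by omega), ← mul_assoc,
        ← hcm i t (by omega) (by omega), mul_assoc]
    · have ht : i + 1 = t := by omega
      subst ht
      have e : wordV s (i + 1 + 1) = s (i + 1) * (s i * wordV s i) := rfl
      rw [e]
      calc s (i + 1) * (s i * wordV s i) * s (i + 1)
          = s (i + 1) * s i * (wordV s i * s (i + 1)) := by simp [mul_assoc]
        _ = s (i + 1) * s i * (s (i + 1) * wordV s i) := by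
            rw [wordV_comm s n hcm i (i + 1) (by omega) (by omega)]
        _ = s (i + 1) * s i * s (i + 1) * wordV s i := by simp [mul_assoc]
        _ = s i * s (i + 1) * s i * wordV s i := by rw [← hbr i (by omega)]
        _ = s i * (s (i + 1) * (s i * wordV s i)) := by simp [mul_assoc]

theorem liftAux {G : Type*} [Group G] :
    ∀ (n : ℕ) (s : ℕ → G),
      (∀ i, i + 1 < n → s i * s i = 1) →
      (∀ i, i + 1 + 1 < n → s i * s (i + 1) * s i = s (i + 1) * s i * s (i + 1)) →
      (∀ i j, i + 1 < j → j + 1 < n → s i * s j = s j * s i) →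
      ∃ Φ : Perm (Fin n) →* G, ∀ (i : ℕ) (h : i + 1 < n),
        Φ (Equiv.swap ⟨i, Nat.lt_of_succ_lt h⟩ ⟨i + 1, h⟩) = s i := by
  intro n
  induction n with
  | zero =>
    intro s _ _ _
    exact ⟨1, fun i h => absurd h (by omega)⟩
  | succ m IH =>
    intro s hinv hbr hcm
    obtain ⟨Φ', hΦ'⟩ := IH (fun j => s (j + 1)) (fun i hi => hinv (i + 1) (by omega))
      (fun i hi => hbr (i + 1) (by omega))
      (fun i j hij hj => hcm (i + 1) (j + 1) (by omega) (by omega))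
    set F : Perm (Fin (m + 1)) → G := fun π =>
      wordV s (π 0).val * Φ' (shrink ((π 0).cycleRange * π)
        (by rw [Perm.mul_apply, Fin.cycleRange_self])) with hF
    have form : ∀ (kv : ℕ) (hkv : kv < m + 1) (ρ : Perm (Fin m)),
        F ((Fin.cycleRange ⟨kv, hkv⟩)⁻¹ * extPerm ρ) = wordV s kv * Φ' ρ := by
      intro kv hkv ρ
      have h0 : ((Fin.cycleRange (⟨kv, hkv⟩ : Fin (m + 1)))⁻¹ * extPerm ρ) 0 = ⟨kv, hkv⟩ := by
        rw [Perm.mul_apply, extPerm_zero, Perm.inv_eq_iff_eq, Fin.cycleRange_self]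
      simp only [hF]
      congr 1
      · rw [h0]
      · apply congrArg
        apply shrink_eq
        rw [h0, mul_inv_cancel_left]
    have decomp : ∀ π : Perm (Fin (m + 1)), ∃ (kv : ℕ) (hkv : kv < m + 1) (ρ : Perm (Fin m)),
        π = (Fin.cycleRange ⟨kv, hkv⟩)⁻¹ * extPerm ρ := by
      intro π
      refine ⟨(π 0).val, (π 0).isLt, shrink ((π 0).cycleRange * π)
        (by rw [Perm.mul_apply, Fin.cycleRange_self]), ?_⟩
      rw [ext_shrink]
      simp only [Fin.eta]
      rw [inv_mul_cancel_left]
    have key : ∀ (i : ℕ) (h : i + 1 < m + 1) (π : Perm (Fin (m + 1))),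
        F (Equiv.swap ⟨i, Nat.lt_of_succ_lt h⟩ ⟨i + 1, h⟩ * π) = s i * F π := by
      intro i h π
      obtain ⟨kv, hkv, ρ, rfl⟩ := decomp π
      rw [form kv hkv ρ, ← mul_assoc]
      rcases lt_trichotomy (i + 1) kv with hA | hB | hCD
      · -- case A : i + 1 < kv
        have him : i + 1 < m := by omega
        have hswap : Equiv.swap (⟨i, Nat.lt_of_succ_lt h⟩ : Fin (m + 1)) ⟨i + 1, h⟩ *
              (Fin.cycleRange ⟨kv, hkv⟩)⁻¹
            = (Fin.cycleRange ⟨kv, hkv⟩)⁻¹ *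
              extPerm (Equiv.swap ⟨i, by omega⟩ ⟨i + 1, him⟩) := by
          rw [swap_mul_inv]
          congr 1
          rw [extPerm_swap]
          congr 1
          · rw [Fin.cycleRange_of_lt (by simp [Fin.lt_def]; omega)]
            apply Fin.ext
            rw [Fin.val_add_one_of_lt (by simp [Fin.lt_def, Fin.last]; omega)]
            simp
          · rw [Fin.cycleRange_of_lt (by simp [Fin.lt_def]; omega)]
            apply Fin.ext
            rw [Fin.val_add_one_of_lt (by simp [Fin.lt_def, Fin.last]; omega)]
            simp
        rw [hswap, mul_assoc, ← extPerm_mul, form kv hkv, map_mul, hΦ' i him,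
          ← mul_assoc, wordV_braid s (m + 1) hbr hcm kv i hA hkv, mul_assoc]
      · -- case B : i + 1 = kv
        subst hB
        have hcr := cycleRange_succ_mk i hkv
        rw [hcr, mul_inv_rev, Equiv.swap_inv, ← mul_assoc, Equiv.swap_mul_self, one_mul,
          form i (by omega) ρ,
          show wordV s (i + 1) = s i * wordV s i from rfl,
          ← mul_assoc, ← mul_assoc, hinv i (by omega), one_mul]
      · rcases Nat.eq_or_lt_of_le (by omega : kv ≤ i) with hC | hD
        · -- case C : kv = i
          subst hC
          have hcr := cycleRange_succ_mk kv h
          have hth : Equiv.swap (⟨kv, Nat.lt_of_succ_lt h⟩ : Fin (m + 1)) ⟨kv + 1, h⟩ *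
              (Fin.cycleRange ⟨kv, hkv⟩)⁻¹ = (Fin.cycleRange ⟨kv + 1, h⟩)⁻¹ := by
            rw [hcr, mul_inv_rev, Equiv.swap_inv]
          rw [hth, form (kv + 1) h ρ,
            show wordV s (kv + 1) = s kv * wordV s kv from rfl, mul_assoc]
        · -- case D : kv < i
          obtain ⟨i', rfl⟩ : ∃ i', i = i' + 1 := ⟨i - 1, by omega⟩
          have him : i' + 1 < m := by omega
          have hswap : Equiv.swap (⟨i' + 1, Nat.lt_of_succ_lt h⟩ : Fin (m + 1)) ⟨i' + 1 + 1, h⟩ *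
                (Fin.cycleRange ⟨kv, hkv⟩)⁻¹
              = (Fin.cycleRange ⟨kv, hkv⟩)⁻¹ *
                extPerm (Equiv.swap ⟨i', by omega⟩ ⟨i' + 1, him⟩) := by
            rw [swap_mul_inv]
            congr 1
            rw [extPerm_swap]
            congr 1
            · rw [Fin.cycleRange_of_gt (by simp [Fin.lt_def]; omega)]
              apply Fin.ext
              simp
            · rw [Fin.cycleRange_of_gt (by simp [Fin.lt_def]; omega)]
              apply Fin.ext
              simp
          rw [hswap, mul_assoc, ← extPerm_mul, form kv hkv, map_mul, hΦ' i' him,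
            ← mul_assoc, wordV_comm s (m + 1) hcm kv (i' + 1) (by omega) (by omega),
            mul_assoc]
    have hone : F 1 = 1 := by
      have h1 := form 0 (Nat.succ_pos m) 1
      rw [extPerm_one, mul_one, show (⟨0, Nat.succ_pos m⟩ : Fin (m + 1)) = 0 from rfl,
        Fin.cycleRange_zero, inv_one, show wordV s 0 = 1 from rfl, map_one, mul_one] at h1
      exact h1
    have hmul : ∀ a b : Perm (Fin (m + 1)), F (a * b) = F a * F b := by
      intro a
      have ha : a ∈ Submonoid.closure
          (Set.range fun i : Fin m => Equiv.swap (Fin.castSucc i) (Fin.succ i)) := by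
        rw [Equiv.Perm.mclosure_swap_castSucc_succ]
        exact Submonoid.mem_top a
      induction ha using Submonoid.closure_induction with
      | mem x hx =>
        obtain ⟨i, rfl⟩ := hx
        intro b
        have hi : (i : ℕ) + 1 < m + 1 := by omega
        have hx' : Equiv.swap (Fin.castSucc i) (Fin.succ i)
            = Equiv.swap ⟨(i : ℕ), Nat.lt_of_succ_lt hi⟩ ⟨(i : ℕ) + 1, hi⟩ := by
          congr 1 <;> apply Fin.ext <;> simp
        have hgen : F (Equiv.swap (⟨(i : ℕ), Nat.lt_of_succ_lt hi⟩ : Fin (m + 1))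
            ⟨(i : ℕ) + 1, hi⟩) = s i := by
          have hk := key (i : ℕ) hi 1
          rwa [mul_one, hone, mul_one] at hk
        show F (Equiv.swap (Fin.castSucc i) (Fin.succ i) * b)
            = F (Equiv.swap (Fin.castSucc i) (Fin.succ i)) * F b
        rw [hx', key (i : ℕ) hi b, hgen]
      | one => intro b; rw [one_mul, hone, one_mul]
      | mul x y hx hy ihx ihy =>
        intro b
        rw [mul_assoc, ihx (y * b), ihy b, ihx y]
        exact (mul_assoc _ _ _).symm
    refine ⟨MonoidHom.mk' F hmul, ?_⟩
    intro i h
    have hk := key i h 1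
    rwa [mul_one, hone, mul_one] at hk

end Lift

/-- The sorting action is a well-defined action of `S(r)` on `Walk_r(ρ,σ)`:
there is a group homomorphism `S(r) → Aut(Walk_r(ρ,σ))` sending each Coxeter
generator `(i i+1)` to the operator `R_i`. -/
theorem stmt6 (d r : ℕ) (ρ σ : Equiv.Perm (Fin d)) :
    ∃ R : Equiv.Perm (Fin r) →* Equiv.Perm (Walk d r ρ σ),
      ∀ (i : ℕ) (h : i + 1 < r) (W : Walk d r ρ σ),
        (R (Equiv.swap (⟨i, Nat.lt_of_succ_lt h⟩ : Fin r) (⟨i + 1, h⟩ : Fin r)) W).val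
          = Rop i h W.val := by
  classical
  have hkeep : ∀ (i : ℕ) (h : i + 1 < r) (W : Walk d r ρ σ),
      ρ * stepProd (Rop i h W.val) = σ := by
    intro i h W
    rw [stepProd_Rop]
    exact W.2
  let RW : (i : ℕ) → i + 1 < r → Walk d r ρ σ → Walk d r ρ σ :=
    fun i h W => ⟨Rop i h W.val, hkeep i h W⟩
  have hinvol : ∀ (i : ℕ) (h : i + 1 < r), Function.Involutive (RW i h) := by
    intro i h W
    apply Subtype.ext
    exact Rop_Rop i h W.val
  let s : ℕ → Equiv.Perm (Walk d r ρ σ) :=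
    fun i => if h : i + 1 < r then Function.Involutive.toPerm (RW i h) (hinvol i h) else 1
  have hs : ∀ (i : ℕ) (h : i + 1 < r) (W : Walk d r ρ σ),
      (s i W).val = Rop i h W.val := by
    intro i h W
    show ((if h : i + 1 < r then Function.Involutive.toPerm (RW i h) (hinvol i h) else 1)
      W).val = Rop i h W.val
    rw [dif_pos h]
    rfl
  have hinv : ∀ i, i + 1 < r → s i * s i = 1 := by
    intro i h
    apply Equiv.ext
    intro W
    apply Subtype.ext
    rw [Equiv.Perm.mul_apply, Equiv.Perm.one_apply, hs i h, hs i h]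
    exact Rop_Rop i h W.val
  have hbr : ∀ i, i + 1 + 1 < r →
      s i * s (i + 1) * s i = s (i + 1) * s i * s (i + 1) := by
    intro i h2
    have hi : i + 1 < r := by omega
    apply Equiv.ext
    intro W
    apply Subtype.ext
    rw [Equiv.Perm.mul_apply, Equiv.Perm.mul_apply, Equiv.Perm.mul_apply,
      Equiv.Perm.mul_apply, hs i hi, hs (i + 1) h2, hs i hi, hs (i + 1) h2, hs i hi,
      hs (i + 1) h2]
    exact Rop_braid i h2 W.val
  have hcm : ∀ i j, i + 1 < j → j + 1 < r → s i * s j = s j * s i := by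
    intro i j hij hj
    have hi : i + 1 < r := by omega
    apply Equiv.ext
    intro W
    apply Subtype.ext
    rw [Equiv.Perm.mul_apply, Equiv.Perm.mul_apply, hs i hi, hs j hj, hs j hj, hs i hi]
    exact Rop_comm i j hij hj W.val
  obtain ⟨Φ, hΦ⟩ := liftAux r s hinv hbr hcm
  refine ⟨Φ, ?_⟩
  intro i h W
  rw [hΦ i h]
  exact hs i h W
end

section
/- Every orbit of the sorting action of S(r) on Walk_r(ρ,σ) contains exactly one monotone walk, i.e., exactly one tuple whose spectrum (t₁,…,t_r) is weakly increasing. -/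
/-- The generator condition characterizing the sorting action: the homomorphism
`R : S(r) → Aut(Walk_r(ρ,σ))` sends each Coxeter generator `(i i+1)` to `R_i`. -/
def IsSortingAction {d r : ℕ} {ρ σ : Equiv.Perm (Fin d)}
    (R : Equiv.Perm (Fin r) →* Equiv.Perm (Walk d r ρ σ)) : Prop :=
  ∀ (i : ℕ) (h : i + 1 < r) (W : Walk d r ρ σ),
    (R (Equiv.swap (⟨i, Nat.lt_of_succ_lt h⟩ : Fin r) (⟨i + 1, h⟩ : Fin r)) W).val
      = Rop i h W.val

namespace Aux
variable {d r : ℕ}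

lemma swap_lt_of_lt {t a u v : Fin d} (hu : u < t) (hv : v < t) (ha : a < t) :
    Equiv.swap u v a < t := by
  rcases eq_or_ne a u with rfl | h1
  · rw [Equiv.swap_apply_left]; exact hv
  rcases eq_or_ne a v with rfl | h2
  · rw [Equiv.swap_apply_right]; exact hu
  · rw [Equiv.swap_apply_of_ne_of_ne h1 h2]; exact ha

lemma colour_conjStep (c x : Step d) (h : colour c < colour x) :
    colour (conjStep c x) = colour x := by
  have h2 : stepPerm c x.1.2 = x.1.2 :=
    Equiv.swap_apply_of_ne_of_ne (lt_trans c.2 h).ne' h.ne'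
  have h1 : stepPerm c x.1.1 < stepPerm c x.1.2 := by
    rw [h2]; exact swap_lt_of_lt (lt_trans c.2 h) h x.2
  unfold conjStep
  exact (congrArg colour (dif_pos h1 : conjStep c x = ⟨(stepPerm c x.1.1, stepPerm c x.1.2), h1⟩)).trans h2

lemma colour_Rop (i : ℕ) (h : i + 1 < r) (W : Fin r → Step d) (j : Fin r) :
    colour (Rop i h W j)
      = colour (W (Equiv.swap (⟨i, Nat.lt_of_succ_lt h⟩ : Fin r) ⟨i + 1, h⟩ j)) := by
  set i0 : Fin r := ⟨i, Nat.lt_of_succ_lt h⟩ with hi0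
  set i1 : Fin r := ⟨i + 1, h⟩ with hi1
  have hne : i0 ≠ i1 := by simp [hi0, hi1, Fin.ext_iff]
  unfold Rop
  rcases lt_trichotomy (colour (W i0)) (colour (W i1)) with hc | hc | hc
  · rw [if_pos hc]
    rcases eq_or_ne j i0 with rfl | hj0
    · rw [Function.update_of_ne hne, Function.update_self,
        colour_conjStep _ _ hc, Equiv.swap_apply_left]
    rcases eq_or_ne j i1 with rfl | hj1
    · rw [Function.update_self, Equiv.swap_apply_right]
    · rw [Function.update_of_ne hj1, Function.update_of_ne hj0,
        Equiv.swap_apply_of_ne_of_ne hj0 hj1]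
  · rw [if_neg (by rw [hc]; exact lt_irrefl _), if_neg (by rw [hc]; exact lt_irrefl _)]
    rcases eq_or_ne j i0 with rfl | hj0
    · rw [Equiv.swap_apply_left]; exact hc
    rcases eq_or_ne j i1 with rfl | hj1
    · rw [Equiv.swap_apply_right]; exact hc.symm
    · rw [Equiv.swap_apply_of_ne_of_ne hj0 hj1]
  · rw [if_neg (not_lt.mpr hc.le), if_pos hc]
    rcases eq_or_ne j i0 with rfl | hj0
    · rw [Function.update_of_ne hne, Function.update_self, Equiv.swap_apply_left]
    rcases eq_or_ne j i1 with rfl | hj1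
    · rw [Function.update_self, colour_conjStep _ _ hc, Equiv.swap_apply_right]
    · rw [Function.update_of_ne hj1, Function.update_of_ne hj0,
        Equiv.swap_apply_of_ne_of_ne hj0 hj1]

lemma Rop_eq_self (i : ℕ) (h : i + 1 < r) (W : Fin r → Step d)
    (hc : colour (W ⟨i, Nat.lt_of_succ_lt h⟩) = colour (W ⟨i + 1, h⟩)) :
    Rop i h W = W := by
  unfold Rop
  rw [if_neg (by rw [hc]; exact lt_irrefl _), if_neg (by rw [hc]; exact lt_irrefl _)]

variable {r : ℕ}

def invCountF {α : Type*} [LinearOrder α] (f : Fin r → α) : ℕ :=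
  (Finset.univ.filter fun p : Fin r × Fin r => p.1 < p.2 ∧ f p.2 < f p.1).card

lemma swap_pair_lt (i : ℕ) (h : i + 1 < r) {a b : Fin r} (hab : a < b)
    (hne : ¬(a = ⟨i, Nat.lt_of_succ_lt h⟩ ∧ b = ⟨i + 1, h⟩)) :
    Equiv.swap (⟨i, Nat.lt_of_succ_lt h⟩ : Fin r) ⟨i + 1, h⟩ a
      < Equiv.swap (⟨i, Nat.lt_of_succ_lt h⟩ : Fin r) ⟨i + 1, h⟩ b := by
  set i0 : Fin r := ⟨i, Nat.lt_of_succ_lt h⟩ with hi0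
  set i1 : Fin r := ⟨i + 1, h⟩ with hi1
  have h01 : i0 < i1 := by simp [hi0, hi1, Fin.lt_def]
  rcases eq_or_ne a i0 with rfl | ha0
  · rw [Equiv.swap_apply_left]
    have hb1 : b ≠ i1 := fun hb => hne ⟨rfl, hb⟩
    have hb0 : b ≠ i0 := ne_of_gt hab
    rw [Equiv.swap_apply_of_ne_of_ne hb0 hb1]
    have h1 : b.val ≠ i + 1 := fun hc => hb1 (Fin.ext (by simpa [hi1] using hc))
    have h2 : i < b.val := by simpa [hi0, Fin.lt_def] using hab
    simp only [hi1, Fin.lt_def]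
    omega
  rcases eq_or_ne a i1 with rfl | ha1
  · rw [Equiv.swap_apply_right]
    have hb1 : b ≠ i1 := ne_of_gt hab
    have hb0 : b ≠ i0 := ne_of_gt (lt_trans h01 hab)
    rw [Equiv.swap_apply_of_ne_of_ne hb0 hb1]
    exact lt_trans h01 hab
  · rw [Equiv.swap_apply_of_ne_of_ne ha0 ha1]
    rcases eq_or_ne b i0 with rfl | hb0
    · rw [Equiv.swap_apply_left]
      exact lt_trans hab h01
    rcases eq_or_ne b i1 with rfl | hb1
    · rw [Equiv.swap_apply_right]
      have h1 : a.val ≠ i := fun hc => ha0 (Fin.ext (by simpa [hi0] using hc))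
      have h2 : a.val < i + 1 := by simpa [hi1, Fin.lt_def] using hab
      simp only [hi0, Fin.lt_def]
      omega
    · rw [Equiv.swap_apply_of_ne_of_ne hb0 hb1]
      exact hab

lemma invCountF_swap_lt {α : Type*} [LinearOrder α] (f : Fin r → α) (i : ℕ) (h : i + 1 < r)
    (hd : f ⟨i + 1, h⟩ < f ⟨i, Nat.lt_of_succ_lt h⟩) :
    invCountF (f ∘ ⇑(Equiv.swap (⟨i, Nat.lt_of_succ_lt h⟩ : Fin r) ⟨i + 1, h⟩)) < invCountF f := by
  set i0 : Fin r := ⟨i, Nat.lt_of_succ_lt h⟩ with hi0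
  set i1 : Fin r := ⟨i + 1, h⟩ with hi1
  set s := Equiv.swap i0 i1 with hs
  set A := Finset.univ.filter fun p : Fin r × Fin r => p.1 < p.2 ∧ f p.2 < f p.1 with hA
  have hmem : (i0, i1) ∈ A := by
    simp only [hA, Finset.mem_filter, Finset.mem_univ, true_and]
    exact ⟨by simp [hi0, hi1, Fin.lt_def], hd⟩
  have hinj : Function.Injective fun p : Fin r × Fin r => (s p.1, s p.2) := by
    intro p q hpq
    simp only [Prod.mk.injEq] at hpq
    exact Prod.ext (s.injective hpq.1) (s.injective hpq.2)
  have key : (Finset.univ.filter fun p : Fin r × Fin r =>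
        p.1 < p.2 ∧ (f ∘ ⇑s) p.2 < (f ∘ ⇑s) p.1)
      = (A.erase (i0, i1)).image fun p => (s p.1, s p.2) := by
    ext q
    simp only [Finset.mem_filter, Finset.mem_univ, true_and, Finset.mem_image,
      Finset.mem_erase, hA, Function.comp_apply]
    constructor
    · rintro ⟨hq1, hq2⟩
      have hqne : ¬(q.1 = i0 ∧ q.2 = i1) := by
        rintro ⟨h1, h2⟩
        rw [h1, h2] at hq2
        rw [hs, Equiv.swap_apply_right, Equiv.swap_apply_left] at hq2
        exact absurd hd (not_lt.mpr hq2.le)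
      refine ⟨(s q.1, s q.2), ⟨?_, ⟨swap_pair_lt i h hq1 hqne, hq2⟩⟩, ?_⟩
      · rintro hpe
        rw [Prod.ext_iff] at hpe
        simp only at hpe
        obtain ⟨hp1, hp2⟩ := hpe
        have h1 : q.1 = i1 := by
          have := congrArg (⇑s) hp1
          rwa [hs, Equiv.swap_apply_self, Equiv.swap_apply_left] at this
        have h2 : q.2 = i0 := by
          have := congrArg (⇑s) hp2
          rwa [hs, Equiv.swap_apply_self, Equiv.swap_apply_right] at this
        rw [h1, h2] at hq1
        exact absurd hq1 (by simp [hi0, hi1, Fin.lt_def])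
      · exact Prod.ext (by simp [hs]) (by simp [hs])
    · rintro ⟨p, ⟨hpne, hp1, hp2⟩, rfl⟩
      have hpne' : ¬(p.1 = i0 ∧ p.2 = i1) := by
        rintro ⟨h1, h2⟩; exact hpne (by rw [← h1, ← h2])
      refine ⟨swap_pair_lt i h hp1 hpne', ?_⟩
      simpa [hs] using hp2
  show (Finset.univ.filter fun p : Fin r × Fin r =>
      p.1 < p.2 ∧ (f ∘ ⇑s) p.2 < (f ∘ ⇑s) p.1).card < A.card
  rw [key, Finset.card_image_of_injective _ hinj]
  exact Finset.card_erase_lt_of_mem hmem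

lemma monotone_of_no_descent {α : Type*} [Preorder α] (f : Fin r → α)
    (hf : ∀ (i : ℕ) (h : i + 1 < r), f ⟨i, Nat.lt_of_succ_lt h⟩ ≤ f ⟨i + 1, h⟩) :
    Monotone f := by
  have H : ∀ (k : ℕ) (hk : k < r) (a : Fin r), a.val ≤ k → f a ≤ f ⟨k, hk⟩ := by
    intro k
    induction k with
    | zero =>
      intro hk a ha
      have : a = ⟨0, hk⟩ := Fin.ext (Nat.le_zero.mp ha)
      rw [this]
    | succ n ih =>
      intro hk a ha
      rcases eq_or_lt_of_le ha with he | hl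
      · exact le_of_eq (congrArg f (Fin.ext he))
      · exact le_trans (ih (Nat.lt_of_succ_lt hk) a (Nat.lt_succ_iff.mp hl)) (hf n hk)
  intro a b hab
  have := H b.val b.isLt a hab
  simpa using this

lemma le_apply_of_strictMono (π : Equiv.Perm (Fin r)) (hsm : StrictMono ⇑π) :
    ∀ i : Fin r, i ≤ π i := by
  have H : ∀ n : ℕ, ∀ i : Fin r, i.val = n → i ≤ π i := by
    intro n
    induction n using Nat.strong_induction_on with
    | _ n ih =>
      intro i hi
      by_contra hlt
      push_neg at hlt
      have h2 := ih (π i).val (by omega) (π i) rfl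
      exact lt_irrefl _ (lt_of_le_of_lt h2 (hsm hlt))
  exact fun i => H i.val i rfl

lemma perm_eq_one_of_monotone (π : Equiv.Perm (Fin r)) (hm : Monotone ⇑π) : π = 1 := by
  have hsm : StrictMono ⇑π := hm.strictMono_of_injective π.injective
  have hsm' : StrictMono ⇑π.symm := by
    intro a b hab
    by_contra hle
    push_neg at hle
    rcases eq_or_lt_of_le hle with he | hl
    · exact absurd (π.symm.injective he.symm) (ne_of_lt hab)
    · have := hsm hl
      rw [π.apply_symm_apply, π.apply_symm_apply] at this
      exact absurd hab (not_lt.mpr this.le)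
  ext i
  exact le_antisymm
    (by simpa using le_apply_of_strictMono π.symm hsm' (π i))
    (le_apply_of_strictMono π hsm i)

end Aux

namespace Aux2
open Aux

variable {d r : ℕ} {ρ σ : Equiv.Perm (Fin d)}
  (R : Equiv.Perm (Fin r) →* Equiv.Perm (Walk d r ρ σ))

lemma spec_R_swap (hR : IsSortingAction R) (i : ℕ) (h : i + 1 < r) (W : Walk d r ρ σ) :
    spec (R (Equiv.swap (⟨i, Nat.lt_of_succ_lt h⟩ : Fin r) ⟨i + 1, h⟩) W)
      = spec W ∘ ⇑(Equiv.swap (⟨i, Nat.lt_of_succ_lt h⟩ : Fin r) ⟨i + 1, h⟩) := by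
  funext j
  show colour ((R (Equiv.swap (⟨i, Nat.lt_of_succ_lt h⟩ : Fin r) ⟨i + 1, h⟩) W).val j) = _
  rw [hR i h W]
  exact colour_Rop i h W.val j

lemma R_swap_fix (hR : IsSortingAction R) (i : ℕ) (h : i + 1 < r) (W : Walk d r ρ σ)
    (hc : spec W ⟨i, Nat.lt_of_succ_lt h⟩ = spec W ⟨i + 1, h⟩) :
    R (Equiv.swap (⟨i, Nat.lt_of_succ_lt h⟩ : Fin r) ⟨i + 1, h⟩) W = W := by
  apply Subtype.ext
  rw [hR i h W]
  exact Rop_eq_self i h W.val hc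

lemma spec_R (hR : IsSortingAction R) (π : Equiv.Perm (Fin r)) (W : Walk d r ρ σ) :
    spec (R π W) = spec W ∘ ⇑π⁻¹ := by
  suffices H : ∀ (n : ℕ) (π : Equiv.Perm (Fin r)), invCountF ⇑π = n →
      ∀ W : Walk d r ρ σ, spec (R π W) = spec W ∘ ⇑π⁻¹ from H _ π rfl W
  intro n
  induction n using Nat.strong_induction_on with
  | _ n ih =>
    intro π hn W
    by_cases hdesc : ∃ (i : ℕ) (h : i + 1 < r),
        π ⟨i + 1, h⟩ < π ⟨i, Nat.lt_of_succ_lt h⟩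
    · obtain ⟨i, h, hd⟩ := hdesc
      set s := Equiv.swap (⟨i, Nat.lt_of_succ_lt h⟩ : Fin r) ⟨i + 1, h⟩ with hs
      have hdec : invCountF ⇑(π * s) < n := by
        rw [← hn]
        have hco : ⇑(π * s) = ⇑π ∘ ⇑s := rfl
        rw [hco, hs]
        exact invCountF_swap_lt ⇑π i h hd
      have hps : π = π * s * s := by
        rw [mul_assoc, hs, Equiv.swap_mul_self, mul_one]
      rw [hps, map_mul, Equiv.Perm.mul_apply, ih _ hdec (π * s) rfl,
        spec_R_swap R hR i h W]
      funext j
      simp [mul_inv_rev, hs, Equiv.swap_inv, Equiv.Perm.mul_apply]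
    · push_neg at hdesc
      have hm : Monotone ⇑π :=
        monotone_of_no_descent ⇑π fun i h => hdesc i h
      rw [perm_eq_one_of_monotone π hm]
      simp [spec]
  
lemma R_fix (hR : IsSortingAction R) (τ : Equiv.Perm (Fin r)) (W : Walk d r ρ σ)
    (hmono : Monotone (spec W)) (hfix : spec W ∘ ⇑τ = spec W) : R τ W = W := by
  suffices H : ∀ (n : ℕ) (τ : Equiv.Perm (Fin r)), invCountF ⇑τ = n →
      spec W ∘ ⇑τ = spec W → R τ W = W from H _ τ rfl hfix
  clear hfix τ
  intro n
  induction n using Nat.strong_induction_on with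
  | _ n ih =>
    intro τ hn hfix
    by_cases hdesc : ∃ (i : ℕ) (h : i + 1 < r),
        τ ⟨i + 1, h⟩ < τ ⟨i, Nat.lt_of_succ_lt h⟩
    · obtain ⟨i, h, hd⟩ := hdesc
      set i0 : Fin r := ⟨i, Nat.lt_of_succ_lt h⟩ with hi0
      set i1 : Fin r := ⟨i + 1, h⟩ with hi1
      set s := Equiv.swap i0 i1 with hs
      have h01 : spec W i0 = spec W i1 := by
        refine le_antisymm (hmono (by simp [hi0, hi1, Fin.le_def])) ?_
        have e1 : spec W (τ i1) = spec W i1 := congrFun hfix i1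
        have e0 : spec W (τ i0) = spec W i0 := congrFun hfix i0
        rw [← e1, ← e0]
        exact hmono hd.le
      have hWs : R s W = W := R_swap_fix R hR i h W h01
      have hfs : spec W ∘ ⇑s = spec W := by
        funext j
        simp only [Function.comp_apply, hs]
        rcases eq_or_ne j i0 with rfl | hj0
        · rw [Equiv.swap_apply_left]; exact h01.symm
        rcases eq_or_ne j i1 with rfl | hj1
        · rw [Equiv.swap_apply_right]; exact h01
        · rw [Equiv.swap_apply_of_ne_of_ne hj0 hj1]
      have hfix' : spec W ∘ ⇑(τ * s) = spec W := by
        have hco : ⇑(τ * s) = ⇑τ ∘ ⇑s := rfl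
        rw [hco, ← Function.comp_assoc, hfix, hfs]
      have hdec : invCountF ⇑(τ * s) < invCountF ⇑τ := by
        have hco : ⇑(τ * s) = ⇑τ ∘ ⇑s := rfl
        rw [hco, hs]
        exact invCountF_swap_lt ⇑τ i h hd
      have hps : τ = τ * s * s := by
        rw [mul_assoc, hs, Equiv.swap_mul_self, mul_one]
      calc R τ W = R (τ * s) (R s W) := by rw [← Equiv.Perm.mul_apply, ← map_mul, ← hps]
        _ = R (τ * s) W := by rw [hWs]
        _ = W := ih _ (hn ▸ hdec) (τ * s) rfl hfix'
    · push_neg at hdesc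
      have hm : Monotone ⇑τ :=
        monotone_of_no_descent ⇑τ fun i h => hdesc i h
      rw [perm_eq_one_of_monotone τ hm]
      simp

end Aux2


/-- Every orbit of the sorting action of `S(r)` on `Walk_r(ρ,σ)` contains exactly
one monotone walk, i.e. one walk with weakly increasing spectrum. -/
theorem stmt8 (d r : ℕ) (ρ σ : Equiv.Perm (Fin d))
    (R : Equiv.Perm (Fin r) →* Equiv.Perm (Walk d r ρ σ)) (hR : IsSortingAction R)
    (W : Walk d r ρ σ) :
    ∃! W' : Walk d r ρ σ,
      (∃ π : Equiv.Perm (Fin r), R π W = W') ∧ Monotone (spec W') := by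
  classical
  set π0 := (Tuple.sort (spec W))⁻¹ with hπ0
  have hmono : Monotone (spec (R π0 W)) := by
    rw [Aux2.spec_R R hR π0 W, hπ0, inv_inv]
    exact Tuple.monotone_sort (spec W)
  refine ⟨R π0 W, ⟨⟨π0, rfl⟩, hmono⟩, ?_⟩
  rintro y ⟨⟨πy, rfl⟩, hy⟩
  set τ := πy * π0⁻¹ with hτ
  have key : R τ (R π0 W) = R πy W := by
    rw [← Equiv.Perm.mul_apply, ← map_mul, hτ, inv_mul_cancel_right]
  have hspec : spec (R πy W) = spec (R π0 W) ∘ ⇑τ⁻¹ := by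
    rw [← key, Aux2.spec_R R hR τ (R π0 W)]
  have heq : spec (R π0 W) ∘ ⇑τ⁻¹ = spec (R π0 W) := by
    have h1 : Monotone (spec (R π0 W) ∘ ⇑τ⁻¹) := hspec ▸ hy
    have := Tuple.unique_monotone (f := spec (R π0 W)) (σ := τ⁻¹) (τ := 1) h1
      (by simpa using hmono)
    simpa using this
  have hfix : spec (R π0 W) ∘ ⇑τ = spec (R π0 W) := by
    funext j
    have h1 := congrFun heq (τ j)
    have h2 : spec (R π0 W) j = spec (R π0 W) (τ j) := by simpa using h1
    exact h2.symm
  rw [← key]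
  exact Aux2.R_fix R hR τ (R π0 W) hmono hfix
end

section
/- The number of r-step monotone walks on the Cayley graph of S(d) from ρ to σ depends only on the cycle type of ρ⁻¹σ: if ρ₁⁻¹σ₁ and ρ₂⁻¹σ₂ are conjugate in S(d), then the number of sequences of transpositions ((s₁ t₁),…,(s_r t_r)) with sᵢ < tᵢ, t₁ ≤ ⋯ ≤ t_r, and ρ(s₁ t₁)⋯(s_r t_r) = σ is the same for both pairs. -/
open Finset

section HH
variable {A : Type*} [Ring A]

/-- Complete homogeneous sum of degree `n` in an ordered list of (noncommuting) variables. -/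
def hh : ℕ → List A → A
  | n, [] => if n = 0 then 1 else 0
  | n, x :: xs => ∑ a ∈ Finset.range (n + 1), x ^ a * hh (n - a) xs

@[simp] lemma hh_nil (n : ℕ) : hh (A := A) n [] = if n = 0 then 1 else 0 := rfl

lemma hh_cons (n : ℕ) (x : A) (xs : List A) :
    hh n (x :: xs) = ∑ a ∈ Finset.range (n + 1), x ^ a * hh (n - a) xs := rfl

@[simp] lemma hh_zero (xs : List A) : hh 0 xs = 1 := by
  induction xs with
  | nil => simp
  | cons x xs ih => simp [hh_cons, ih]

lemma hh_singleton (n : ℕ) (y : A) : hh n [y] = y ^ n := by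
  rw [hh_cons]
  rw [Finset.sum_eq_single n]
  · simp
  · intro b hb hbn
    simp only [Finset.mem_range] at hb
    rw [hh_nil, if_neg, mul_zero]
    omega
  · intro h; simp at h

lemma hh_cons_succ (n : ℕ) (x : A) (xs : List A) :
    hh (n + 1) (x :: xs) = x * hh n (x :: xs) + hh (n + 1) xs := by
  rw [hh_cons, Finset.sum_range_succ']
  simp only [pow_zero, one_mul, Nat.sub_zero, Nat.succ_sub_succ_eq_sub]
  rw [hh_cons, Finset.mul_sum]
  congr 1
  refine Finset.sum_congr rfl fun a _ => ?_
  rw [pow_succ', mul_assoc]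
lemma sum_tri {M : Type*} [AddCommMonoid M] (n : ℕ) (F : ℕ → ℕ → M) :
    ∑ a ∈ Finset.range (n + 1), ∑ b ∈ Finset.range (n - a + 1), F a b
      = ∑ m ∈ Finset.range (n + 1), ∑ a ∈ Finset.range (m + 1), F a (m - a) := by
  rw [Finset.sum_sigma', Finset.sum_sigma']
  refine Finset.sum_nbij' (fun p => ⟨p.1 + p.2, p.1⟩) (fun q => ⟨q.2, q.1 - q.2⟩) ?_ ?_ ?_ ?_ ?_
  · rintro ⟨a, b⟩ hp
    simp only [Finset.mem_sigma, Finset.mem_range] at hp ⊢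
    omega
  · rintro ⟨m, a⟩ hq
    simp only [Finset.mem_sigma, Finset.mem_range] at hq ⊢
    omega
  · rintro ⟨a, b⟩ hp
    show (⟨a, a + b - a⟩ : Σ _ : ℕ, ℕ) = ⟨a, b⟩
    simp
  · rintro ⟨m, a⟩ hq
    simp only [Finset.mem_sigma, Finset.mem_range] at hq
    show (⟨a + (m - a), a⟩ : Σ _ : ℕ, ℕ) = ⟨m, a⟩
    have h : a + (m - a) = m := by omega
    rw [h]
  · rintro ⟨a, b⟩ hp
    show F a b = F a (a + b - a)
    simp

lemma hh_append (n : ℕ) (xs ys : List A) :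
    hh n (xs ++ ys) = ∑ a ∈ Finset.range (n + 1), hh a xs * hh (n - a) ys := by
  induction xs generalizing n with
  | nil =>
    simp only [List.nil_append, hh_nil, ite_mul, one_mul, zero_mul]
    rw [Finset.sum_ite_eq' (Finset.range (n + 1)) 0 (fun a => hh (n - a) ys)]
    simp
  | cons x xs ih =>
    rw [List.cons_append, hh_cons]
    have : ∀ a ∈ Finset.range (n + 1), x ^ a * hh (n - a) (xs ++ ys)
        = ∑ b ∈ Finset.range (n - a + 1), x ^ a * hh b xs * hh (n - a - b) ys := by
      intro a _
      rw [ih, Finset.mul_sum]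
      exact Finset.sum_congr rfl fun b _ => by rw [mul_assoc]
    rw [Finset.sum_congr rfl this, sum_tri]
    refine Finset.sum_congr rfl fun m hm => ?_
    rw [hh_cons, Finset.sum_mul]
    refine Finset.sum_congr rfl fun a ha => ?_
    simp only [Finset.mem_range] at hm ha
    rw [mul_assoc]
    have h : n - a - (m - a) = n - m := by omega
    rw [h, ← mul_assoc]

lemma hh_commute {s : A} {xs : List A} (h : ∀ y ∈ xs, Commute s y) (n : ℕ) :
    Commute s (hh n xs) := by
  induction xs generalizing n with
  | nil =>
    rw [hh_nil]
    split <;> simp [Commute.one_right, Commute.zero_right]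
  | cons x xs ih =>
    rw [hh_cons]
    refine Commute.sum_right _ _ _ fun a _ => ?_
    exact ((h x (by simp)).pow_right a).mul_right (ih (fun y hy => h y (by simp [hy])) _)

lemma hh_pair (n : ℕ) (x y : A) :
    hh n [x, y] = ∑ a ∈ Finset.range (n + 1), x ^ a * y ^ (n - a) := by
  rw [hh_cons]
  exact Finset.sum_congr rfl fun a _ => by rw [hh_singleton]

lemma hh_pair_comm {x y : A} (hxy : Commute x y) (n : ℕ) : hh n [x, y] = hh n [y, x] := by
  rw [hh_pair, hh_pair]
  rw [← Finset.sum_range_reflect]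
  refine Finset.sum_congr rfl fun a ha => ?_
  simp only [Finset.mem_range] at ha
  have h1 : n + 1 - 1 - a = n - a := by omega
  have h2 : n - (n - a) = a := by omega
  rw [h1, h2, (hxy.pow_pow (n - a) a).eq]

lemma hh_pair_succ_left (n : ℕ) (x y : A) :
    hh (n + 1) [x, y] = x * hh n [x, y] + y ^ (n + 1) := by
  rw [hh_cons_succ, hh_singleton]

lemma hh_pair_succ_right {x y : A} (hxy : Commute x y) (n : ℕ) :
    hh (n + 1) [x, y] = y * hh n [x, y] + x ^ (n + 1) := by
  rw [hh_pair_comm hxy, hh_pair_succ_left, hh_pair_comm hxy.symm]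

lemma comm_x_hh_pair {x y : A} (hxy : Commute x y) (n : ℕ) : Commute x (hh n [x, y]) := by
  refine hh_commute ?_ n
  intro z hz
  simp only [List.mem_cons, List.not_mem_nil, or_false] at hz
  rcases hz with rfl | rfl
  · exact Commute.refl _
  · exact hxy

section TwoVar
variable {s x y : A} (hx : s * x = y * s - 1) (hy : s * y = x * s + 1) (hxy : Commute x y)

include hx hxy in
lemma s_pow_x : ∀ k : ℕ, s * x ^ (k + 1) = y ^ (k + 1) * s - hh k [x, y] := by
  intro k
  induction k with
  | zero => simpa using hx
  | succ k ih =>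
    have h1 : s * x ^ (k + 2) = (s * x ^ (k + 1)) * x := by
      rw [mul_assoc, ← pow_succ]
    rw [h1, ih, sub_mul, mul_assoc, hx, mul_sub, mul_one, ← mul_assoc, ← pow_succ,
      ← (comm_x_hh_pair hxy k).eq, hh_pair_succ_left]
    abel

include hx hy hxy in
lemma s_comm_hh_pair : ∀ n : ℕ, s * hh n [x, y] = hh n [x, y] * s := by
  intro n
  induction n with
  | zero => simp
  | succ n ih =>
    have hL : hh (n + 1) [x, y] = y * hh n [x, y] + x ^ (n + 1) := hh_pair_succ_right hxy n
    have hR : hh (n + 1) [x, y] = x * hh n [x, y] + y ^ (n + 1) := hh_pair_succ_left n x y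
    calc s * hh (n + 1) [x, y]
        = s * (y * hh n [x, y]) + s * x ^ (n + 1) := by rw [hL, mul_add]
      _ = (x * s + 1) * hh n [x, y] + (y ^ (n + 1) * s - hh n [x, y]) := by
          rw [← mul_assoc, hy, s_pow_x hx hxy]
      _ = x * (s * hh n [x, y]) + y ^ (n + 1) * s := by
          rw [add_mul, one_mul, mul_assoc]; abel
      _ = (x * hh n [x, y] + y ^ (n + 1)) * s := by rw [ih, add_mul, mul_assoc]
      _ = hh (n + 1) [x, y] * s := by rw [← hR]

end TwoVar
end HH

noncomputable section GroupAlg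
open Equiv MonoidAlgebra

instance {d : ℕ} : Fintype (Step d) := by unfold Step; infer_instance
instance {d : ℕ} : DecidableEq (Step d) := by unfold Step; infer_instance

variable {d : ℕ}

/-- The group algebra. -/
abbrev R (d : ℕ) := MonoidAlgebra ℤ (Equiv.Perm (Fin d))

/-- The Jucys–Murphy-type element of colour `u`. -/
def Jc (u : Fin d) : R d :=
  ∑ x ∈ Finset.univ.filter (fun x : Step d => colour x = u),
    MonoidAlgebra.single (stepPerm x) (1 : ℤ)

lemma Jc_eq (u : Fin d) :
    Jc u = ∑ s ∈ Finset.univ.filter (fun s : Fin d => s < u),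
      MonoidAlgebra.single (Equiv.swap s u) (1 : ℤ) := by
  refine Finset.sum_bij' (fun x _ => x.1.1)
    (fun s hs => (⟨(s, u), by simpa using (Finset.mem_filter.mp hs).2⟩ : Step d))
    ?_ ?_ ?_ ?_ ?_
  · intro x hx
    simp only [Finset.mem_filter, Finset.mem_univ, true_and] at hx ⊢
    have := x.2
    rw [← hx]
    exact this
  · intro s hs
    exact Finset.mem_filter.mpr ⟨Finset.mem_univ _, rfl⟩
  · intro x hx
    simp only [Finset.mem_filter, Finset.mem_univ, true_and] at hx
    simp only [colour] at hx
    exact Subtype.ext (Prod.ext rfl hx.symm)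
  · intro s hs
    rfl
  · intro x hx
    simp only [Finset.mem_filter, Finset.mem_univ, true_and] at hx
    simp only [colour] at hx
    simp only [stepPerm]
    rw [hx]

lemma sg_mul (g h : Equiv.Perm (Fin d)) :
    MonoidAlgebra.single g (1 : ℤ) * MonoidAlgebra.single h 1 = MonoidAlgebra.single (g * h) 1 := by
  rw [MonoidAlgebra.single_mul_single, one_mul]

/-- If `θ` fixes `t` and stabilizes the set of points below `t`, then `θ` commutes with `Jc t`. -/
lemma single_comm_J {θ : Equiv.Perm (Fin d)} {t : Fin d} (h1 : θ t = t)
    (h2 : ∀ s, s < t → θ s < t) (h3 : ∀ s, s < t → θ⁻¹ s < t) :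
    Commute (MonoidAlgebra.single θ (1 : ℤ)) (Jc t) := by
  show _ * _ = _ * _
  rw [Jc_eq, Finset.mul_sum, Finset.sum_mul]
  refine Finset.sum_bij' (fun s _ => θ s) (fun s _ => θ⁻¹ s) ?_ ?_ ?_ ?_ ?_
  · intro s hs
    simp only [Finset.mem_filter, Finset.mem_univ, true_and] at hs ⊢
    exact h2 s hs
  · intro s hs
    simp only [Finset.mem_filter, Finset.mem_univ, true_and] at hs ⊢
    exact h3 s hs
  · intro s _; simp
  · intro s _; simp
  · intro s hs
    rw [sg_mul, sg_mul, Equiv.mul_swap_eq_swap_mul, h1]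

lemma filter_lt_succ {a b : Fin d} (hab : (a : ℕ) + 1 = b) :
    Finset.univ.filter (fun s : Fin d => s < b)
      = insert a (Finset.univ.filter (fun s : Fin d => s < a)) := by
  ext s
  simp only [Finset.mem_filter, Finset.mem_univ, true_and, Finset.mem_insert, Fin.lt_def,
    Fin.ext_iff]
  omega

lemma swap_move {a b s : Fin d} (hab : (a : ℕ) + 1 = b) (hs : s < a) :
    Equiv.swap a b * Equiv.swap s a = Equiv.swap s b * Equiv.swap a b := by
  have h1 : Equiv.swap a b s = s := by
    apply Equiv.swap_apply_of_ne_of_ne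
    · exact Fin.ne_of_lt hs
    · exact Fin.ne_of_val_ne (by have := hs; rw [Fin.lt_def] at this; omega)
  have h2 : Equiv.swap a b a = b := Equiv.swap_apply_left _ _
  rw [Equiv.mul_swap_eq_swap_mul, h1, h2]

lemma swap_move' {a b s : Fin d} (hab : (a : ℕ) + 1 = b) (hs : s < a) :
    Equiv.swap a b * Equiv.swap s b = Equiv.swap s a * Equiv.swap a b := by
  have h1 : Equiv.swap a b s = s := by
    apply Equiv.swap_apply_of_ne_of_ne
    · exact Fin.ne_of_lt hs
    · exact Fin.ne_of_val_ne (by have := hs; rw [Fin.lt_def] at this; omega)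
  have h2 : Equiv.swap a b b = a := Equiv.swap_apply_right _ _
  rw [Equiv.mul_swap_eq_swap_mul, h1, h2]

lemma S_one {a b : Fin d} :
    MonoidAlgebra.single (Equiv.swap a b) (1 : ℤ) * MonoidAlgebra.single (Equiv.swap a b) 1
      = 1 := by
  rw [sg_mul, Equiv.swap_mul_self, ← MonoidAlgebra.one_def]

lemma S_mul_Ja {a b : Fin d} (hab : (a : ℕ) + 1 = b) :
    MonoidAlgebra.single (Equiv.swap a b) (1 : ℤ) * Jc a
      = Jc b * MonoidAlgebra.single (Equiv.swap a b) 1 - 1 := by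
  rw [Jc_eq a, Jc_eq b, filter_lt_succ hab, Finset.sum_insert (by simp), add_mul,
    Finset.mul_sum, Finset.sum_mul, S_one]
  have h : ∀ s ∈ Finset.univ.filter (fun s : Fin d => s < a),
      MonoidAlgebra.single (Equiv.swap a b) (1 : ℤ) * MonoidAlgebra.single (Equiv.swap s a) 1
        = MonoidAlgebra.single (Equiv.swap s b) (1 : ℤ)
            * MonoidAlgebra.single (Equiv.swap a b) 1 := by
    intro s hs
    simp only [Finset.mem_filter, Finset.mem_univ, true_and] at hs
    rw [sg_mul, sg_mul, swap_move hab hs]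
  rw [Finset.sum_congr rfl h]
  abel

lemma S_mul_Jb {a b : Fin d} (hab : (a : ℕ) + 1 = b) :
    MonoidAlgebra.single (Equiv.swap a b) (1 : ℤ) * Jc b
      = Jc a * MonoidAlgebra.single (Equiv.swap a b) 1 + 1 := by
  rw [Jc_eq a, Jc_eq b, filter_lt_succ hab, Finset.sum_insert (by simp), mul_add,
    Finset.mul_sum, Finset.sum_mul, S_one]
  have h : ∀ s ∈ Finset.univ.filter (fun s : Fin d => s < a),
      MonoidAlgebra.single (Equiv.swap a b) (1 : ℤ) * MonoidAlgebra.single (Equiv.swap s b) 1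
        = MonoidAlgebra.single (Equiv.swap s a) (1 : ℤ)
            * MonoidAlgebra.single (Equiv.swap a b) 1 := by
    intro s hs
    simp only [Finset.mem_filter, Finset.mem_univ, true_and] at hs
    rw [sg_mul, sg_mul, swap_move' hab hs]
  rw [Finset.sum_congr rfl h]
  abel

lemma S_comm_J_far {a b u : Fin d} (hab : (a : ℕ) + 1 = b)
    (hu : (u : ℕ) < a ∨ (b : ℕ) < u) :
    Commute (MonoidAlgebra.single (Equiv.swap a b) (1 : ℤ)) (Jc u) := by
  have hfix : Equiv.swap a b u = u := by
    apply Equiv.swap_apply_of_ne_of_ne <;> [skip; skip] <;>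
      exact Fin.ne_of_val_ne (by omega)
  have hmap : ∀ s : Fin d, s < u → Equiv.swap a b s < u := by
    intro s hs
    rw [Fin.lt_def] at hs ⊢
    rcases eq_or_ne s a with rfl | hsa
    · rw [Equiv.swap_apply_left]; omega
    · rcases eq_or_ne s b with rfl | hsb
      · rw [Equiv.swap_apply_right]; omega
      · rw [Equiv.swap_apply_of_ne_of_ne hsa hsb]; exact hs
  refine single_comm_J hfix hmap ?_
  intro s hs
  rw [Equiv.swap_inv]
  exact hmap s hs

lemma J_comm_lt {u v : Fin d} (huv : u < v) : Commute (Jc u) (Jc v) := by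
  rw [Jc_eq u]
  refine Commute.sum_left _ _ _ fun s hs => ?_
  simp only [Finset.mem_filter, Finset.mem_univ, true_and] at hs
  have hsv : s < v := hs.trans huv
  have hfix : Equiv.swap s u v = v := by
    apply Equiv.swap_apply_of_ne_of_ne
    · exact (Fin.ne_of_lt hsv).symm
    · exact (Fin.ne_of_lt huv).symm
  have hmap : ∀ w : Fin d, w < v → Equiv.swap s u w < v := by
    intro w hw
    rcases eq_or_ne w s with rfl | hws
    · rw [Equiv.swap_apply_left]; exact huv
    · rcases eq_or_ne w u with rfl | hwu
      · rw [Equiv.swap_apply_right]; exact hsv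
      · rw [Equiv.swap_apply_of_ne_of_ne hws hwu]; exact hw
  refine single_comm_J hfix hmap ?_
  intro w hw
  rw [Equiv.swap_inv]
  exact hmap w hw

lemma J_comm (u v : Fin d) : Commute (Jc u) (Jc v) := by
  rcases lt_trichotomy u v with h | rfl | h
  · exact J_comm_lt h
  · exact Commute.refl _
  · exact (J_comm_lt h).symm

end GroupAlg

noncomputable section Central
open Equiv MonoidAlgebra

variable {d : ℕ}

/-- The list of Jucys–Murphy elements of colours `t, t+1, …, d-1`. -/
def Jlist (d : ℕ) (t : ℕ) : List (R d) :=
  if h : t < d then Jc ⟨t, h⟩ :: Jlist d (t + 1) else []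
termination_by d - t

lemma Jlist_nil {t : ℕ} (h : d ≤ t) : Jlist d t = [] := by
  rw [Jlist, dif_neg (by omega)]

lemma Jlist_cons {t : ℕ} (h : t < d) : Jlist d t = Jc ⟨t, h⟩ :: Jlist d (t + 1) := by
  rw [Jlist, dif_pos h]

lemma mem_Jlist {t : ℕ} {x : R d} (hx : x ∈ Jlist d t) :
    ∃ u : Fin d, t ≤ (u : ℕ) ∧ x = Jc u := by
  by_cases h : t < d
  · rw [Jlist_cons h] at hx
    rcases List.mem_cons.mp hx with rfl | hx'
    · exact ⟨⟨t, h⟩, le_refl _, rfl⟩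
    · obtain ⟨u, hu, rfl⟩ := mem_Jlist hx'
      exact ⟨u, by omega, rfl⟩
  · rw [Jlist_nil (by omega)] at hx
    simp at hx
termination_by d - t

lemma S_comm_hh_Jlist {a b : Fin d} (hab : (a : ℕ) + 1 = b) :
    ∀ k t n, d - t ≤ k → (t ≤ (a : ℕ) ∨ (b : ℕ) < t) →
      Commute (MonoidAlgebra.single (Equiv.swap a b) (1 : ℤ)) (hh n (Jlist d t)) := by
  intro k
  induction k with
  | zero =>
    intro t n hk _
    rw [Jlist_nil (by omega)]
    exact hh_commute (by simp) n
  | succ k ih =>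
    intro t n hk hcond
    by_cases htd : t < d
    · rcases hcond with hta | hbt
      · rcases Nat.lt_or_ge t a.val with h | h
        · rw [Jlist_cons htd, hh_cons]
          refine Commute.sum_right _ _ _ fun m _ => ?_
          refine Commute.mul_right (Commute.pow_right ?_ m)
            (ih (t + 1) _ (by omega) (Or.inl (by omega)))
          exact S_comm_J_far hab (Or.inl (by simpa using h))
        · have hta' : t = (a : ℕ) := by omega
          have htb : t + 1 < d := by omega
          have ha' : (⟨t, htd⟩ : Fin d) = a := Fin.ext hta'
          have hb' : (⟨t + 1, htb⟩ : Fin d) = b := Fin.ext (show t + 1 = (b : ℕ) by omega)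
          rw [Jlist_cons htd, Jlist_cons htb, ha', hb']
          have hsplit : Jc a :: Jc b :: Jlist d (t + 2) = [Jc a, Jc b] ++ Jlist d (t + 2) := rfl
          rw [hsplit, hh_append]
          refine Commute.sum_right _ _ _ fun m _ => ?_
          refine Commute.mul_right ?_ ?_
          · exact s_comm_hh_pair (S_mul_Ja hab) (S_mul_Jb hab) (J_comm a b) m
          · refine hh_commute ?_ _
            intro y hy
            obtain ⟨u, hu, rfl⟩ := mem_Jlist hy
            exact S_comm_J_far hab (Or.inr (by omega))
      · refine hh_commute ?_ n
        intro y hy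
        obtain ⟨u, hu, rfl⟩ := mem_Jlist hy
        exact S_comm_J_far hab (Or.inr (by omega))
    · rw [Jlist_nil (by omega)]
      exact hh_commute (by simp) n

/-- The centralizer of `hh n (Jlist d 0)` viewed as a subgroup of the permutation group. -/
def centralSub (d : ℕ) (n : ℕ) : Subgroup (Equiv.Perm (Fin d)) where
  carrier := {g | Commute (MonoidAlgebra.single g (1 : ℤ)) (hh n (Jlist d 0))}
  one_mem' := by
    show Commute _ _
    rw [← MonoidAlgebra.one_def]
    exact Commute.one_left _
  mul_mem' := by
    intro g h hg hh'
    show Commute _ _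
    rw [← sg_mul]
    exact Commute.mul_left hg hh'
  inv_mem' := by
    intro g hg
    show Commute _ _
    have h1 : MonoidAlgebra.single g⁻¹ (1 : ℤ) * MonoidAlgebra.single g 1 = 1 := by
      rw [sg_mul, inv_mul_cancel, ← MonoidAlgebra.one_def]
    have h2 : MonoidAlgebra.single g (1 : ℤ) * MonoidAlgebra.single g⁻¹ 1 = 1 := by
      rw [sg_mul, mul_inv_cancel, ← MonoidAlgebra.one_def]
    have hg' : MonoidAlgebra.single g (1 : ℤ) * hh n (Jlist d 0)
        = hh n (Jlist d 0) * MonoidAlgebra.single g 1 := hg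
    show _ * _ = _ * _
    symm
    calc hh n (Jlist d 0) * MonoidAlgebra.single g⁻¹ 1
        = MonoidAlgebra.single g⁻¹ (1 : ℤ) * (MonoidAlgebra.single g 1 * hh n (Jlist d 0))
            * MonoidAlgebra.single g⁻¹ 1 := by rw [← mul_assoc, h1, one_mul]
      _ = MonoidAlgebra.single g⁻¹ (1 : ℤ) * (hh n (Jlist d 0) * MonoidAlgebra.single g 1)
            * MonoidAlgebra.single g⁻¹ 1 := by rw [hg']
      _ = MonoidAlgebra.single g⁻¹ (1 : ℤ) * hh n (Jlist d 0) := by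
          rw [mul_assoc, mul_assoc, h2, mul_one]

lemma swap_mem_central {n : ℕ} : ∀ m : ℕ, ∀ a b : Fin d, a < b → (b : ℕ) - (a : ℕ) ≤ m →
    Equiv.swap a b ∈ centralSub d n := by
  intro m
  induction m with
  | zero => intro a b hab hm; rw [Fin.lt_def] at hab; omega
  | succ m ih =>
    intro a b hab hm
    rw [Fin.lt_def] at hab
    rcases Nat.lt_or_ge ((a : ℕ) + 1) (b : ℕ) with h | h
    · -- non-adjacent: conjugate through c = b - 1
      have hcd : (b : ℕ) - 1 < d := by have := b.2; omega
      set c : Fin d := ⟨(b : ℕ) - 1, hcd⟩ with hc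
      have hcb : (c : ℕ) + 1 = (b : ℕ) := by simp [hc]; omega
      have hcbmem : Equiv.swap c b ∈ centralSub d n := by
        show Commute _ _
        exact S_comm_hh_Jlist hcb d 0 n (by omega) (Or.inl (by omega))
      have hacmem : Equiv.swap a c ∈ centralSub d n := by
        refine ih a c ?_ ?_
        · rw [Fin.lt_def]; simp [hc]; omega
        · simp [hc]; omega
      have hkey : Equiv.swap a b = Equiv.swap c b * Equiv.swap a c * Equiv.swap c b := by
        have h1 : Equiv.swap c b a = a := by
          apply Equiv.swap_apply_of_ne_of_ne <;> exact Fin.ne_of_val_ne (by simp [hc]; omega)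
        have h2 : Equiv.swap c b c = b := Equiv.swap_apply_left _ _
        have h3 : Equiv.swap c b * Equiv.swap a c = Equiv.swap a b * Equiv.swap c b := by
          rw [Equiv.mul_swap_eq_swap_mul, h1, h2]
        rw [h3, mul_assoc, Equiv.swap_mul_self, mul_one]
      rw [hkey]
      exact mul_mem (mul_mem hcbmem hacmem) hcbmem
    · -- adjacent
      have hab' : (a : ℕ) + 1 = (b : ℕ) := by omega
      show Commute _ _
      exact S_comm_hh_Jlist hab' d 0 n (by omega) (Or.inl (by omega))

lemma central_eq_top (n : ℕ) : centralSub d n = ⊤ := by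
  have hle : Subgroup.closure {σ : Equiv.Perm (Fin d) | σ.IsSwap} ≤ centralSub d n := by
    apply (Subgroup.closure_le (centralSub d n)).mpr
    rintro σ ⟨x, y, hxy, rfl⟩
    rcases lt_or_gt_of_ne hxy with h | h
    · exact swap_mem_central d x y h (by have := y.2; omega)
    · rw [Equiv.swap_comm]
      exact swap_mem_central d y x h (by have := x.2; omega)
  rw [Equiv.Perm.closure_isSwap] at hle
  exact eq_top_iff.mpr hle

end Central

noncomputable section Comb
open Equiv MonoidAlgebra
open scoped Classical

variable {d : ℕ}

lemma stepProd_cons {r : ℕ} (x : Step d) (g : Fin r → Step d) :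
    stepProd (Fin.cons x g) = stepPerm x * stepProd g := by
  unfold stepProd
  rw [List.ofFn_succ, List.prod_cons, Fin.cons_zero]
  congr 1

lemma mono_cons {r : ℕ} {x : Step d} {g : Fin r → Step d}
    (hg : Monotone fun j => colour (g j))
    (hb : ∀ j, (colour x : ℕ) ≤ (colour (g j) : ℕ)) :
    Monotone fun j => colour ((Fin.cons x g : Fin (r + 1) → Step d) j) := by
  intro i j hij
  induction i using Fin.cases with
  | zero =>
    induction j using Fin.cases with
    | zero => exact le_refl _
    | succ j' =>
      simp only [Fin.cons_zero, Fin.cons_succ]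
      rw [Fin.le_def]
      exact hb j'
  | succ i' =>
    induction j using Fin.cases with
    | zero => exact absurd hij (by simp [Fin.lt_def, Fin.le_def])
    | succ j' =>
      simp only [Fin.cons_succ]
      exact hg (by rwa [Fin.succ_le_succ_iff] at hij)

/-- The sum, over monotone walks of length `r` whose colours are all `≥ t`, of the
corresponding permutations in the group algebra. -/
def Aw (d r t : ℕ) : R d :=
  ∑ W ∈ Finset.univ.filter (fun W : Fin r → Step d =>
      (Monotone fun j => colour (W j)) ∧ ∀ j, t ≤ ((colour (W j)) : ℕ)),
    MonoidAlgebra.single (stepProd W) (1 : ℤ)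

lemma Aw_zero (t : ℕ) : Aw d 0 t = 1 := by
  rw [Aw]
  rw [Finset.filter_true_of_mem]
  · rw [Finset.univ_unique, Finset.sum_singleton]
    have : stepProd (default : Fin 0 → Step d) = 1 := by
      unfold stepProd
      simp
    rw [this, ← MonoidAlgebra.one_def]
  · intro W _
    constructor
    · intro a; exact a.elim0
    · intro j; exact j.elim0

lemma Aw_succ (r t : ℕ) :
    Aw d (r + 1) t = ∑ u ∈ Finset.univ.filter (fun u : Fin d => t ≤ (u : ℕ)),
      Jc u * Aw d r (u : ℕ) := by
  rw [Aw]
  -- reindex over (first step, tail)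
  have step1 : ∑ W ∈ Finset.univ.filter (fun W : Fin (r + 1) → Step d =>
        (Monotone fun j => colour (W j)) ∧ ∀ j, t ≤ ((colour (W j)) : ℕ)),
      MonoidAlgebra.single (stepProd W) (1 : ℤ)
      = ∑ p ∈ (Finset.univ.filter (fun x : Step d => t ≤ ((colour x) : ℕ))).sigma
          (fun x => Finset.univ.filter (fun g : Fin r → Step d =>
            (Monotone fun j => colour (g j)) ∧ ∀ j, ((colour x) : ℕ) ≤ ((colour (g j)) : ℕ))),
        MonoidAlgebra.single (stepPerm p.1 * stepProd p.2) (1 : ℤ) := by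
    refine Finset.sum_bij' (fun W _ => ⟨W 0, Fin.tail W⟩) (fun p _ => Fin.cons p.1 p.2)
      ?_ ?_ ?_ ?_ ?_
    · intro W hW
      simp only [Finset.mem_filter, Finset.mem_univ, true_and] at hW
      simp only [Finset.mem_sigma, Finset.mem_filter, Finset.mem_univ, true_and]
      refine ⟨hW.2 0, ?_, ?_⟩
      · intro i j hij
        exact hW.1 (by rwa [Fin.succ_le_succ_iff])
      · intro j
        have := hW.1 (Fin.zero_le j.succ)
        rw [Fin.le_def] at this
        exact this
    · rintro ⟨x, g⟩ hp
      simp only [Finset.mem_sigma, Finset.mem_filter, Finset.mem_univ, true_and] at hp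
      simp only [Finset.mem_filter, Finset.mem_univ, true_and]
      refine ⟨mono_cons hp.2.1 hp.2.2, ?_⟩
      intro j
      induction j using Fin.cases with
      | zero => simpa using hp.1
      | succ j' =>
        simp only [Fin.cons_succ]
        exact le_trans hp.1 (hp.2.2 j')
    · intro W _
      exact Fin.cons_self_tail W
    · rintro ⟨x, g⟩ _
      simp only [Fin.cons_zero, Fin.tail_cons]
    · intro W _
      rw [← stepProd_cons, Fin.cons_self_tail]
  rw [step1, Finset.sum_sigma]
  have step2 : ∀ x ∈ Finset.univ.filter (fun x : Step d => t ≤ ((colour x) : ℕ)),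
      (∑ g ∈ Finset.univ.filter (fun g : Fin r → Step d =>
          (Monotone fun j => colour (g j)) ∧ ∀ j, ((colour x) : ℕ) ≤ ((colour (g j)) : ℕ)),
        MonoidAlgebra.single (stepPerm x * stepProd g) (1 : ℤ))
      = MonoidAlgebra.single (stepPerm x) (1 : ℤ) * Aw d r ((colour x) : ℕ) := by
    intro x _
    rw [Aw, Finset.mul_sum]
    refine Finset.sum_congr rfl fun g _ => ?_
    rw [sg_mul]
  rw [Finset.sum_congr rfl step2]
  -- now group by colour
  rw [← Finset.sum_fiberwise_of_maps_to (g := fun x : Step d => colour x)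
    (t := Finset.univ.filter (fun u : Fin d => t ≤ (u : ℕ)))
    (by intro x hx
        simp only [Finset.mem_filter, Finset.mem_univ, true_and] at hx ⊢
        exact hx)]
  refine Finset.sum_congr rfl fun u hu => ?_
  simp only [Finset.mem_filter, Finset.mem_univ, true_and] at hu
  have hset : (Finset.univ.filter (fun x : Step d => t ≤ ((colour x) : ℕ))).filter
      (fun x => colour x = u) = Finset.univ.filter (fun x : Step d => colour x = u) := by
    ext x
    simp only [Finset.mem_filter, Finset.mem_univ, true_and]
    constructor
    · rintro ⟨_, h2⟩; exact h2
    · intro h2; exact ⟨by rw [h2]; exact hu, h2⟩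
  rw [hset, Jc, Finset.sum_mul]
  refine Finset.sum_congr rfl fun x hx => ?_
  simp only [Finset.mem_filter, Finset.mem_univ, true_and] at hx
  rw [hx]

lemma K_succ (n t : ℕ) :
    hh (n + 1) (Jlist d t) = ∑ u ∈ Finset.univ.filter (fun u : Fin d => t ≤ (u : ℕ)),
      Jc u * hh n (Jlist d (u : ℕ)) := by
  by_cases htd : t < d
  · rw [Jlist_cons htd, hh_cons_succ, ← Jlist_cons htd,
      K_succ n (t + 1)]
    have hset : Finset.univ.filter (fun u : Fin d => t ≤ (u : ℕ))
        = insert (⟨t, htd⟩ : Fin d)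
            (Finset.univ.filter (fun u : Fin d => t + 1 ≤ (u : ℕ))) := by
      ext u
      simp only [Finset.mem_filter, Finset.mem_univ, true_and, Finset.mem_insert, Fin.ext_iff]
      omega
    rw [hset, Finset.sum_insert (by simp)]
  · rw [Jlist_nil (by omega), hh_nil, if_neg (by omega)]
    rw [Finset.filter_false_of_mem, Finset.sum_empty]
    intro u _
    have := u.2
    omega
termination_by d - t

lemma Aw_eq_hh : ∀ r t : ℕ, Aw d r t = hh r (Jlist d t) := by
  intro r
  induction r with
  | zero => intro t; rw [Aw_zero, hh_zero]
  | succ r ih =>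
    intro t
    rw [Aw_succ, K_succ]
    exact Finset.sum_congr rfl fun u _ => by rw [ih]

end Comb

noncomputable section Final
open Equiv MonoidAlgebra
open scoped Classical

variable {d : ℕ}

lemma coeff_eq_card (r : ℕ) (π : Equiv.Perm (Fin d)) :
    (hh r (Jlist d 0)).coeff π
      = (Nat.card {W : Fin r → Step d //
          stepProd W = π ∧ Monotone fun j => colour (W j)} : ℤ) := by
  rw [← Aw_eq_hh, Aw]
  have hF : Finset.univ.filter (fun W : Fin r → Step d =>
        (Monotone fun j => colour (W j)) ∧ ∀ j, 0 ≤ ((colour (W j)) : ℕ))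
      = Finset.univ.filter (fun W : Fin r → Step d => Monotone fun j => colour (W j)) := by
    apply Finset.filter_congr
    intro W _
    simp
  rw [hF, MonoidAlgebra.coeff_sum, Finsupp.finset_sum_apply]
  have : ∀ W ∈ Finset.univ.filter (fun W : Fin r → Step d => Monotone fun j => colour (W j)),
      (MonoidAlgebra.single (stepProd W) (1 : ℤ)).coeff π
        = if stepProd W = π then (1 : ℤ) else 0 := by
    intro W _
    exact Finsupp.single_apply
  rw [Finset.sum_congr rfl this, Finset.sum_boole]
  rw [Nat.card_eq_fintype_card, Fintype.card_subtype]
  congr 2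
  rw [Finset.filter_filter]
  apply Finset.filter_congr
  intro W _
  simp [and_comm]

lemma coeff_conj_inv (r : ℕ) (π τ : Equiv.Perm (Fin d)) :
    (hh r (Jlist d 0)).coeff (τ * π * τ⁻¹) = (hh r (Jlist d 0)).coeff π := by
  have hmem : τ ∈ centralSub d r := by rw [central_eq_top]; trivial
  have hc : MonoidAlgebra.single τ (1 : ℤ) * hh r (Jlist d 0)
      = hh r (Jlist d 0) * MonoidAlgebra.single τ 1 := hmem
  have happ := congrArg (fun f : R d => f.coeff (τ * π)) hc
  simp only [MonoidAlgebra.single_mul_apply, MonoidAlgebra.mul_single_apply, one_mul,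
    mul_one, inv_mul_cancel_left] at happ
  exact happ.symm


/-- The number of `r`-step monotone walks from `ρ` to `σ` on the transposition
Cayley graph of `S(d)` depends only on the cycle type (conjugacy class) of
`ρ⁻¹σ`. -/
theorem stmt10 (d r : ℕ) (ρ₁ σ₁ ρ₂ σ₂ : Equiv.Perm (Fin d))
    (h : IsConj (ρ₁⁻¹ * σ₁) (ρ₂⁻¹ * σ₂)) :
    Nat.card {W : Fin r → Step d //
        ρ₁ * stepProd W = σ₁ ∧ Monotone fun j => colour (W j)} =
      Nat.card {W : Fin r → Step d //
        ρ₂ * stepProd W = σ₂ ∧ Monotone fun j => colour (W j)} := by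
  have key : ∀ ρ σ : Equiv.Perm (Fin d),
      Nat.card {W : Fin r → Step d //
          ρ * stepProd W = σ ∧ Monotone fun j => colour (W j)}
        = Nat.card {W : Fin r → Step d //
          stepProd W = ρ⁻¹ * σ ∧ Monotone fun j => colour (W j)} := by
    intro ρ σ
    apply Nat.card_congr
    apply Equiv.subtypeEquivRight
    intro W
    constructor
    · rintro ⟨h1, h2⟩
      exact ⟨by rw [← h1, inv_mul_cancel_left], h2⟩
    · rintro ⟨h1, h2⟩
      exact ⟨by rw [h1, mul_inv_cancel_left], h2⟩
  rw [key, key]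
  have : ((Nat.card {W : Fin r → Step d //
      stepProd W = ρ₁⁻¹ * σ₁ ∧ Monotone fun j => colour (W j)}) : ℤ)
      = ((Nat.card {W : Fin r → Step d //
      stepProd W = ρ₂⁻¹ * σ₂ ∧ Monotone fun j => colour (W j)}) : ℤ) := by
    rw [← coeff_eq_card r, ← coeff_eq_card r]
    obtain ⟨τ, hτ⟩ := isConj_iff.mp h
    rw [← hτ, coeff_conj_inv]
  exact_mod_cast this


end Final
end

section
/- For every d ≥ 1 and g ≥ 0, the sum over all pairs of partitions α, β of d of the monotone double Hurwitz numbers satisfies Σ_{α,β ⊢ d} H⃗_g(α,β) ≤ 4^d · H⃗_g(1^d, 1^d). -/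
set_option maxRecDepth 8000


/-- The steps and endpoints of a walk generate a transitive subgroup of `S(d)`. -/
def TransitiveVia {d : ℕ} (S : Set (Equiv.Perm (Fin d))) : Prop :=
  ∀ x y : Fin d, ∃ g ∈ Subgroup.closure S, g x = y

/-- The permutation `ρ` has cycle type given by the partition `α` of `d`
(fixed points contribute parts equal to `1`). -/
def HasCycleType {d : ℕ} (ρ : Equiv.Perm (Fin d)) (α : d.Partition) : Prop :=
  α.parts = ρ.cycleType + Multiset.replicate (d - ρ.support.card) 1

/-- The partition `1^d` of `d`. -/
def onesPartition (d : ℕ) : d.Partition :=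
  ⟨Multiset.replicate d 1, fun {_} hi => by simp_all [Multiset.eq_of_mem_replicate hi], by simp⟩

/-- The monotone double Hurwitz number `H⃗_g(α,β)`: the number of monotone
transitive walks of length `2g - 2 + ℓ(α) + ℓ(β)` on the transposition Cayley
graph of `S(d)` from a permutation of cycle type `α` to one of cycle type `β`. -/
noncomputable def monotoneHurwitz (d g : ℕ) (α β : d.Partition) : ℕ :=
  Nat.card {p : Equiv.Perm (Fin d) ×
      (Fin (2 * g + α.parts.card + β.parts.card - 2) → Step d) //
    HasCycleType p.1 α ∧ HasCycleType (p.1 * stepProd p.2) β ∧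
    (Monotone fun j => colour (p.2 j)) ∧
    TransitiveVia ({p.1} ∪ Set.range fun j => stepPerm (p.2 j))}

/-- The double Hurwitz number `H_g(α,β)`: same as `monotoneHurwitz` but without
the monotonicity constraint. -/
noncomputable def hurwitz (d g : ℕ) (α β : d.Partition) : ℕ :=
  Nat.card {p : Equiv.Perm (Fin d) ×
      (Fin (2 * g + α.parts.card + β.parts.card - 2) → Step d) //
    HasCycleType p.1 α ∧ HasCycleType (p.1 * stepProd p.2) β ∧
    TransitiveVia ({p.1} ∪ Set.range fun j => stepPerm (p.2 j))}


open Equiv Equiv.Perm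

namespace HurwitzAux

variable {d : ℕ}

instance : DecidableEq (Step d) := by unfold Step; infer_instance
instance : Fintype (Step d) := by unfold Step; infer_instance

/-! ### μ and the cycle surgery lemma -/

def mu (σ : Perm (Fin d)) : ℕ := σ.support.card - σ.cycleType.card

lemma multiset_card_le_sum (s : Multiset ℕ) (h : ∀ x ∈ s, 1 ≤ x) :
    Multiset.card s ≤ s.sum := by
  induction s using Multiset.induction_on with
  | empty => simp
  | cons a s ih =>
    simp only [Multiset.card_cons, Multiset.sum_cons]
    have := h a (Multiset.mem_cons_self a s)
    have := ih (fun x hx => h x (Multiset.mem_cons_of_mem hx))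
    omega

lemma cycleType_card_le (σ : Perm (Fin d)) :
    Multiset.card σ.cycleType ≤ σ.support.card := by
  have := multiset_card_le_sum σ.cycleType
    (fun x hx => le_trans (by norm_num) (Equiv.Perm.two_le_of_mem_cycleType hx))
  rwa [Equiv.Perm.sum_cycleType] at this

lemma mu_one : mu (1 : Perm (Fin d)) = 0 := by simp [mu]

lemma mu_inv (σ : Perm (Fin d)) : mu σ⁻¹ = mu σ := by
  simp [mu, Equiv.Perm.cycleType_inv, Equiv.Perm.support_inv]

lemma surgery {σ : Perm (Fin d)} {u t : Fin d} (hut : u ≠ t) (hst : σ u = t) :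
    mu σ = mu (σ * Equiv.swap u t) + 1 := by
  classical
  have hσu : σ u ≠ u := by rw [hst]; exact Ne.symm hut
  have hσt : σ t ≠ t := fun h => hut (σ.injective (hst.trans h.symm))
  set c := σ.cycleOf u with hc
  have hcyc : c.IsCycle := Equiv.Perm.isCycle_cycleOf σ hσu
  have hcu : c u = t := by rw [hc, Equiv.Perm.cycleOf_apply_self, hst]
  have hsc_ut : σ.SameCycle u t := ⟨1, by simpa using hst⟩
  have hct : c t = σ t := by rw [hc, Equiv.Perm.cycleOf_apply]; simp [hsc_ut]
  have hu_mem : u ∈ c.support := by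
    rw [Equiv.Perm.mem_support, hcu]; exact hut.symm
  have ht_mem : t ∈ c.support := by
    rw [Equiv.Perm.mem_support, hct]; exact hσt
  set R := σ * c⁻¹ with hR
  have hsRc : σ = R * c := by rw [hR]; group
  have hdisj : R.Disjoint c := by
    intro x
    by_cases hx : c x = x
    · exact Or.inr hx
    · left
      have hy : c (c⁻¹ x) = x := by simp
      have hymem : (c⁻¹ x) ∈ c.support := by
        rw [Equiv.Perm.mem_support, hy]
        intro h; exact hx (by conv_lhs => rw [h, hy])
      have hsy : σ.SameCycle u (c⁻¹ x) := (Equiv.Perm.mem_support_cycleOf_iff.1 hymem).1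
      have hcs : c (c⁻¹ x) = σ (c⁻¹ x) := by
        rw [hc, Equiv.Perm.cycleOf_apply]; exact if_pos hsy
      rw [hR]
      simp only [Equiv.Perm.mul_apply]
      rw [← hcs, hy]
  have hctype : σ.cycleType = R.cycleType + c.cycleType := by
    rw [hsRc]; exact Equiv.Perm.Disjoint.cycleType_mul hdisj
  -- two cases on the size of the cycle `c`
  rcases lt_or_ge 2 c.support.card with hbig | hsmall
  · -- big cycle case
    have hcinvt : c⁻¹ t = u := by rw [← hcu]; simp
    have hffx : c⁻¹ (c⁻¹ t) ≠ t := by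
      rw [hcinvt]
      intro habs
      have hctu : c t = u := by rw [← habs]; simp
      have hcinvu : c⁻¹ u = t := by rw [← hctu]; simp
      have hsub : c.support ⊆ {u, t} := by
        intro x hxmem
        have hsy : σ.SameCycle u x := (Equiv.Perm.mem_support_cycleOf_iff.1 hxmem).1
        obtain ⟨z, hz⟩ := hsy
        have hzz : (c ^ z) u = x := by rw [hc, Equiv.Perm.cycleOf_zpow_apply_self]; exact hz
        have key : ∀ w : ℤ, (c ^ w) u = u ∨ (c ^ w) u = t := by
          intro w
          induction w using Int.induction_on with
          | zero => left; simp
          | succ k ih =>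
            have hstep : (c ^ ((k:ℤ)+1)) u = c ((c ^ (k:ℤ)) u) := by
              rw [add_comm, zpow_add, zpow_one, Equiv.Perm.mul_apply]
            rcases ih with h | h
            · right; rw [hstep, h, hcu]
            · left; rw [hstep, h, hctu]
          | pred k ih =>
            have hstep : (c ^ (-(k:ℤ)-1)) u = c⁻¹ ((c ^ (-(k:ℤ))) u) := by
              rw [sub_eq_add_neg, add_comm, zpow_add, zpow_neg_one, Equiv.Perm.mul_apply]
            rcases ih with h | h
            · right; rw [hstep, h, hcinvu]
            · left; rw [hstep, h, hcinvt]
        rcases key z with h | h <;> rw [hzz] at h <;> simp [h]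
      have : c.support.card ≤ 2 := le_trans (Finset.card_le_card hsub)
        (le_trans (Finset.card_insert_le _ _) (by simp))
      omega
    set c' := c * Equiv.swap u t with hc'
    have hc'inv : c'⁻¹ = Equiv.swap t (c⁻¹ t) * c⁻¹ := by
      rw [hc', mul_inv_rev, Equiv.swap_inv, hcinvt, Equiv.swap_comm]
    have hc'invcyc : c'⁻¹.IsCycle := by
      rw [hc'inv]
      exact hcyc.inv.swap_mul (by rw [hcinvt]; exact hut) hffx
    have hc'cyc : c'.IsCycle := by
      have := hc'invcyc.inv
      rwa [inv_inv] at this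
    have hsuppinv : c'⁻¹.support = c⁻¹.support \ {t} := by
      rw [hc'inv]
      exact Equiv.Perm.support_swap_mul_eq c⁻¹ t hffx
    have hsuppc' : c'.support = c.support \ {t} := by
      rw [← Equiv.Perm.support_inv c', hsuppinv, Equiv.Perm.support_inv]
    have hcardc' : c'.support.card = c.support.card - 1 := by
      rw [hsuppc', Finset.sdiff_singleton_eq_erase, Finset.card_erase_of_mem ht_mem]
    have hdisj' : R.Disjoint c' := by
      intro x
      rcases hdisj x with h | h
      · exact Or.inl h
      · right
        have : x ∉ c'.support := by
          rw [hsuppc']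
          intro hmem
          exact (Equiv.Perm.mem_support.1 (Finset.mem_sdiff.1 hmem).1) h
        exact Equiv.Perm.notMem_support.1 this
    have hsRc' : σ * Equiv.swap u t = R * c' := by rw [hsRc, hc', mul_assoc]
    have hctype' : (σ * Equiv.swap u t).cycleType = R.cycleType + c'.cycleType := by
      rw [hsRc']; exact Equiv.Perm.Disjoint.cycleType_mul hdisj'
    have hcards : σ.support.card = R.cycleType.sum + c.support.card := by
      rw [← Equiv.Perm.sum_cycleType σ, hctype, Multiset.sum_add, hcyc.cycleType]; simp
    have hcards' : (σ * Equiv.swap u t).support.card = R.cycleType.sum + c'.support.card := by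
      rw [← Equiv.Perm.sum_cycleType, hctype', Multiset.sum_add, hc'cyc.cycleType]; simp
    have hk : Multiset.card σ.cycleType = Multiset.card R.cycleType + 1 := by
      rw [hctype, Multiset.card_add, hcyc.cycleType]; simp
    have hk' : Multiset.card (σ * Equiv.swap u t).cycleType
        = Multiset.card R.cycleType + 1 := by
      rw [hctype', Multiset.card_add, hc'cyc.cycleType]; simp
    have hRle := cycleType_card_le R
    have hRsum : R.cycleType.sum = R.support.card := Equiv.Perm.sum_cycleType R
    unfold mu
    omega
  · -- small cycle: c = swap u t
    have h2 : c.support.card = 2 := le_antisymm hsmall hcyc.two_le_card_support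
    have hIsSwap := Equiv.Perm.card_support_eq_two.1 h2
    have hsupp : c.support = {u, t} := by
      refine (Finset.eq_of_subset_of_card_le ?_ ?_).symm
      · intro x hx
        rcases Finset.mem_insert.1 hx with h | h
        · subst h; exact hu_mem
        · rw [Finset.mem_singleton.1 h]; exact ht_mem
      · rw [h2, Finset.card_insert_of_notMem (by simp [hut]), Finset.card_singleton]
    have hctu : c t = u := by
      have h1 : c t ∈ c.support := Equiv.Perm.apply_mem_support.2 ht_mem
      rw [hsupp] at h1
      rcases Finset.mem_insert.1 h1 with h | h
      · exact h
      · exact absurd (Finset.mem_singleton.1 h) (Equiv.Perm.mem_support.1 ht_mem)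
    have hceq : c = Equiv.swap u t := by
      ext x
      by_cases hxu : x = u
      · subst hxu; rw [hcu, Equiv.swap_apply_left]
      by_cases hxt : x = t
      · subst hxt; rw [hctu, Equiv.swap_apply_right]
      · have : x ∉ c.support := by rw [hsupp]; simp [hxu, hxt]
        rw [Equiv.Perm.notMem_support.1 this, Equiv.swap_apply_of_ne_of_ne hxu hxt]
    have hprod : σ * Equiv.swap u t = R := by
      rw [hsRc, hceq, mul_assoc]; simp
    have hcard : σ.support.card = R.cycleType.sum + 2 := by
      rw [← Equiv.Perm.sum_cycleType, hctype, Multiset.sum_add, hcyc.cycleType, h2]; simp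
    have hcycR : Multiset.card σ.cycleType = Multiset.card R.cycleType + 1 := by
      rw [hctype, Multiset.card_add, hcyc.cycleType]; simp
    have hRsum : R.cycleType.sum = R.support.card := Equiv.Perm.sum_cycleType R
    have hRle := cycleType_card_le R
    rw [hprod]
    unfold mu
    omega



def blockProd (l : List (Step d)) : Perm (Fin d) := (l.map stepPerm).prod

def prodUpTo (k : ℕ) (m : Fin d → List (Step d)) : Perm (Fin d) :=
  (((List.finRange d).take k).map (fun c => blockProd (m c))).prod

def OKBlocks (m : Fin d → List (Step d)) : Prop := ∀ c, ∀ s ∈ m c, colour s = c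

def ins (o : Fin d → Option (Step d)) (m : Fin d → List (Step d)) :
    Fin d → List (Step d) := fun c => (o c).toList ++ m c

def OKOpt (o : Fin d → Option (Step d)) : Prop := ∀ c s, o c = some s → colour s = c

noncomputable def countSomes (o : Fin d → Option (Step d)) : ℕ :=
  (Finset.univ.filter (fun c => (o c).isSome)).card

lemma listprod_fix (l : List (Perm (Fin d))) (x : Fin d) (h : ∀ g ∈ l, g x = x) :
    l.prod x = x := by
  induction l with
  | nil => simp
  | cons a l ih =>
    simp only [List.prod_cons, Equiv.Perm.mul_apply]
    rw [ih (fun g hg => h g (List.mem_cons_of_mem a hg)), h a List.mem_cons_self]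

lemma stepPerm_fix (s : Step d) (x : Fin d) (hx : (colour s).val < x.val) :
    stepPerm s x = x := by
  have h1 : s.1.1 < s.1.2 := s.2
  apply Equiv.swap_apply_of_ne_of_ne
  · intro h; subst h; exact absurd (lt_trans h1 hx) (lt_irrefl _)
  · intro h; subst h; exact absurd hx (lt_irrefl _)

lemma blockProd_fix (l : List (Step d)) (c : Fin d) (hl : ∀ s ∈ l, colour s = c)
    (x : Fin d) (hx : c.val < x.val) : blockProd l x = x := by
  apply listprod_fix
  intro g hg
  obtain ⟨s, hs, rfl⟩ := List.mem_map.1 hg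
  exact stepPerm_fix s x (by rw [hl s hs]; exact hx)

lemma prodUpTo_succ (k : ℕ) (hk : k < d) (m : Fin d → List (Step d)) :
    prodUpTo (k+1) m = prodUpTo k m * blockProd (m ⟨k, hk⟩) := by
  unfold prodUpTo
  have hlen : k < (List.finRange d).length := by simpa using hk
  rw [List.take_succ, List.getElem?_eq_getElem hlen]
  simp only [List.getElem_finRange, Option.toList_some, List.map_append, List.prod_append]
  simp [Fin.cast]

lemma prodUpTo_top (k : ℕ) (hk : d ≤ k) (m : Fin d → List (Step d)) :
    prodUpTo k m = prodUpTo d m := by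
  unfold prodUpTo
  rw [List.take_of_length_le (by simpa using hk), List.take_of_length_le (by simp)]

lemma prodUpTo_congr (k : ℕ) (m m' : Fin d → List (Step d))
    (h : ∀ c : Fin d, c.val < k → m c = m' c) : prodUpTo k m = prodUpTo k m' := by
  induction k with
  | zero => rfl
  | succ k ih =>
    rcases lt_or_ge k d with hk | hk
    · rw [prodUpTo_succ k hk, prodUpTo_succ k hk,
        ih (fun c hc => h c (Nat.lt_succ_of_lt hc)), h ⟨k, hk⟩ (Nat.lt_succ_self k)]
    · rw [prodUpTo_top (k+1) (Nat.le_succ_of_le hk) m, prodUpTo_top (k+1) (Nat.le_succ_of_le hk) m',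
        ← prodUpTo_top k hk m, ← prodUpTo_top k hk m']
      exact ih (fun c hc => h c (Nat.lt_succ_of_lt hc))

lemma prodUpTo_fix (k : ℕ) (m : Fin d → List (Step d)) (hm : OKBlocks m)
    (x : Fin d) (hx : k ≤ x.val) : prodUpTo k m x = x := by
  induction k with
  | zero => rfl
  | succ k ih =>
    have hxd := x.isLt
    have hk : k < d := by omega
    rw [prodUpTo_succ k hk]
    simp only [Equiv.Perm.mul_apply]
    rw [blockProd_fix (m ⟨k, hk⟩) ⟨k, hk⟩ (hm _) x (lt_of_lt_of_le (Nat.lt_succ_self k) hx),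
      ih (le_trans (Nat.le_succ k) hx)]



lemma ext_ins (k : ℕ) (m : Fin d → List (Step d)) (hm : OKBlocks m)
    (σ : Perm (Fin d)) (hσ : ∀ x : Fin d, k ≤ x.val → σ x = x) :
    ∃ o : Fin d → Option (Step d), OKOpt o ∧ (∀ c : Fin d, k ≤ c.val → o c = none) ∧
      prodUpTo k (ins o m) = σ * prodUpTo k m ∧ countSomes o = mu σ := by
  induction k generalizing σ with
  | zero =>
    have hσ1 : σ = 1 := Equiv.ext fun x => by simpa using hσ x (Nat.zero_le _)
    refine ⟨fun _ => none, fun c s h => by simp at h, fun c _ => rfl, ?_, ?_⟩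
    · rw [hσ1]; simp [prodUpTo, ins]
    · rw [hσ1, mu_one]; simp [countSomes]
  | succ k ih =>
    rcases lt_or_ge k d with hkd | hkd
    · -- k < d
      set t : Fin d := ⟨k, hkd⟩ with htdef
      have htval : t.val = k := rfl
      by_cases ht : σ t = t
      · -- top point fixed
        have hσ' : ∀ x : Fin d, k ≤ x.val → σ x = x := by
          intro x hx
          by_cases hxk : x.val = k
          · have hxt : x = t := Fin.ext hxk
            rw [hxt]; exact ht
          · exact hσ x (by omega)
        obtain ⟨o, h1, h2, h3, h4⟩ := ih σ hσ'
        refine ⟨o, h1, fun c hc => h2 c (by omega), ?_, h4⟩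
        have hot : o t = none := h2 t (le_of_eq htval.symm)
        have hit : ins o m t = m t := by simp [ins, hot]
        rw [prodUpTo_succ k hkd, prodUpTo_succ k hkd, hit, h3, mul_assoc]
      · -- top point moved
        set u : Fin d := σ⁻¹ t with hudef
        have hut : σ u = t := by rw [hudef]; simp
        have hune : u ≠ t := fun h => ht (by rw [← h, hut, h])
        have hult : u.val < k := by
          rcases Nat.lt_or_ge u.val (k+1) with h1 | h1
          · rcases Nat.lt_or_ge u.val k with h3 | h3
            · exact h3
            · exact absurd (Fin.ext (by omega : u.val = t.val)) hune
          · exact absurd (by rw [← hut, hσ u h1]) hune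
        set σ' : Perm (Fin d) := σ * Equiv.swap u t with hσ'def
        have hσ't : σ' t = t := by
          rw [hσ'def]; simp only [Equiv.Perm.mul_apply, Equiv.swap_apply_right]; exact hut
        have hσ'fix : ∀ x : Fin d, k ≤ x.val → σ' x = x := by
          intro x hx
          by_cases hxk : x.val = k
          · have hxt : x = t := Fin.ext hxk
            rw [hxt]; exact hσ't
          · have hxu : x ≠ u := fun h => by rw [h] at hx; omega
            have hxt : x ≠ t := fun h => hxk (by rw [h])
            rw [hσ'def]
            simp only [Equiv.Perm.mul_apply, Equiv.swap_apply_of_ne_of_ne hxu hxt]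
            exact hσ x (by omega)
        obtain ⟨o', h1, h2, h3, h4⟩ := ih σ' hσ'fix
        have hQfix : ∀ x : Fin d, k ≤ x.val → prodUpTo k m x = x :=
          fun x hx => prodUpTo_fix k m hm x hx
        set Q : Perm (Fin d) := prodUpTo k m with hQdef
        set x₀ : Fin d := Q⁻¹ u with hx₀def
        have hQx₀ : Q x₀ = u := by rw [hx₀def]; simp
        have hx₀lt : x₀.val < k := by
          by_contra hge
          push_neg at hge
          have h5 : Q x₀ = x₀ := hQfix x₀ hge
          rw [hQx₀] at h5
          rw [← h5] at hge
          omega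
        have hx₀t : x₀ < t := by
          rw [Fin.lt_def, htval]; exact hx₀lt
        set s₀ : Step d := ⟨(x₀, t), hx₀t⟩ with hs₀def
        set o : Fin d → Option (Step d) := Function.update o' t (some s₀) with hodef
        have hot' : o' t = none := h2 t (le_of_eq htval.symm)
        refine ⟨o, ?_, ?_, ?_, ?_⟩
        · intro c s hcs
          by_cases hct : c = t
          · subst hct
            rw [hodef, Function.update_self] at hcs
            cases hcs; rfl
          · rw [hodef, Function.update_of_ne hct] at hcs
            exact h1 c s hcs
        · intro c hc
          have hct : c ≠ t := fun h => by rw [h, htval] at hc; omega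
          rw [hodef, Function.update_of_ne hct]
          exact h2 c (by omega)
        · have hins_t : ins o m t = s₀ :: m t := by
            simp [ins, hodef, Function.update_self]
          have hcongr : prodUpTo k (ins o m) = prodUpTo k (ins o' m) := by
            apply prodUpTo_congr
            intro c hc
            have hct : c ≠ t := fun h => by rw [h, htval] at hc; omega
            simp [ins, hodef, Function.update_of_ne hct]
          have hblock : blockProd (s₀ :: m t) = Equiv.swap x₀ t * blockProd (m t) := by
            simp only [blockProd, List.map_cons, List.prod_cons]; rfl
          have hQt : Q t = t := hQfix t (le_of_eq htval.symm)
          have hconj : Equiv.swap u t * Q = Q * Equiv.swap x₀ t := by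
            have hsw := Equiv.swap_apply_apply Q x₀ t
            rw [hQx₀, hQt] at hsw
            rw [hsw]; group
          have hkey : σ' * Equiv.swap u t = σ := by
            rw [hσ'def, mul_assoc, Equiv.swap_mul_self, mul_one]
          rw [prodUpTo_succ k hkd, prodUpTo_succ k hkd, hcongr, h3, hins_t, hblock]
          calc σ' * Q * (Equiv.swap x₀ t * blockProd (m t))
              = σ' * (Q * Equiv.swap x₀ t) * blockProd (m t) := by group
            _ = σ' * (Equiv.swap u t * Q) * blockProd (m t) := by rw [← hconj]
            _ = (σ' * Equiv.swap u t) * Q * blockProd (m t) := by group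
            _ = σ * (Q * blockProd (m t)) := by rw [hkey, mul_assoc]
        · have hfil : (Finset.univ.filter (fun c => (o c).isSome))
              = insert t (Finset.univ.filter (fun c => (o' c).isSome)) := by
            ext c
            by_cases hct : c = t
            · subst hct
              simp [hodef, Function.update_self]
            · simp [hodef, Function.update_of_ne hct, hct]
          have htnot : t ∉ Finset.univ.filter (fun c => (o' c).isSome) := by
            simp [hot']
          rw [countSomes, hfil, Finset.card_insert_of_notMem htnot]
          rw [show (Finset.univ.filter (fun c => (o' c).isSome)).card = countSomes o' from rfl,
            h4]
          rw [surgery hune hut]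
    · -- d ≤ k
      obtain ⟨o, h1, h2, h3, h4⟩ := ih σ (fun x hx => absurd x.isLt (by omega))
      refine ⟨o, h1, fun c hc => h2 c (by omega), ?_, h4⟩
      rw [prodUpTo_top (k+1) (by omega), prodUpTo_top (k+1) (by omega),
        ← prodUpTo_top k hkd, ← prodUpTo_top k hkd, h3]


def toList (m : Fin d → List (Step d)) : List (Step d) := (List.finRange d).flatMap m

def ColourLE (a b : Step d) : Prop := colour a ≤ colour b

lemma blockProd_toList (m : Fin d → List (Step d)) :
    blockProd (toList m) = prodUpTo d m := by
  unfold blockProd toList prodUpTo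
  rw [List.take_of_length_le (by simp), List.map_flatMap]
  rw [List.flatMap, List.prod_flatten, List.map_map]
  rfl

lemma okblocks_filter (l : List (Step d)) :
    OKBlocks (fun c => l.filter (fun s => colour s = c)) := by
  intro c s hs
  have := List.of_mem_filter hs
  simpa using this

lemma okblocks_ins {m : Fin d → List (Step d)} {o : Fin d → Option (Step d)}
    (hm : OKBlocks m) (ho : OKOpt o) : OKBlocks (ins o m) := by
  intro c s hs
  rcases List.mem_append.1 hs with h | h
  · cases hoc : o c with
    | none => rw [hoc] at h; simp at h
    | some s' =>
      rw [hoc] at h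
      simp only [Option.toList_some, List.mem_singleton] at h
      subst h
      exact ho c s hoc
  · exact hm c s h

lemma mem_toList {m : Fin d → List (Step d)} {s : Step d} :
    s ∈ toList m ↔ ∃ c, s ∈ m c := by
  unfold toList
  rw [List.mem_flatMap]
  constructor
  · rintro ⟨c, _, hc⟩; exact ⟨c, hc⟩
  · rintro ⟨c, hc⟩; exact ⟨c, List.mem_finRange c, hc⟩

lemma recover (m : Fin d → List (Step d)) (hm : OKBlocks m) (c : Fin d) :
    (toList m).filter (fun s => colour s = c) = m c := by
  unfold toList
  have key : ∀ L : List (Fin d), L.Nodup → c ∈ L →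
      (L.flatMap m).filter (fun s => colour s = c) = m c := by
    intro L
    induction L with
    | nil => intro _ h; simp at h
    | cons a L ih =>
      intro hnd hc
      rw [List.flatMap_cons, List.filter_append]
      have hblock : ∀ b : Fin d, (m b).filter (fun s => colour s = c)
          = if b = c then m b else [] := by
        intro b
        split_ifs with hbc
        · subst hbc
          apply List.filter_eq_self.2
          intro s hs
          simp [hm b s hs]
        · apply List.filter_eq_nil_iff.2
          intro s hs
          simp [hm b s hs, hbc]
      by_cases hac : a = c
      · subst hac
        rw [hblock a, if_pos rfl]
        have : (L.flatMap m).filter (fun s => colour s = a) = [] := by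
          apply List.filter_eq_nil_iff.2
          intro s hs
          rcases List.mem_flatMap.1 hs with ⟨b, hbL, hsb⟩
          have hba : b ≠ a := fun h => (List.nodup_cons.1 hnd).1 (h ▸ hbL)
          simp [hm b s hsb, hba]
        rw [this, List.append_nil]
      · rw [hblock a, if_neg hac, List.nil_append]
        refine ih (List.nodup_cons.1 hnd).2 ?_
        rcases List.mem_cons.1 hc with h | h
        · exact absurd h.symm hac
        · exact h
  exact key _ (List.nodup_finRange d) (List.mem_finRange c)

lemma split_sorted (l : List (Step d)) (hl : l.Pairwise ColourLE) :
    toList (fun c => l.filter (fun s => colour s = c)) = l := by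
  unfold toList
  induction l with
  | nil => simp
  | cons a tl ih =>
    have htl : tl.Pairwise ColourLE := (List.pairwise_cons.1 hl).2
    have hhead : ∀ s ∈ tl, colour a ≤ colour s := (List.pairwise_cons.1 hl).1
    have key : ∀ L : List (Fin d), L.Pairwise (· < ·) → colour a ∈ L →
        L.flatMap (fun c => (a :: tl).filter (fun s => colour s = c))
          = a :: L.flatMap (fun c => tl.filter (fun s => colour s = c)) := by
      intro L
      induction L with
      | nil => intro _ h; simp at h
      | cons b L ihL =>
        intro hLp hmem
        rw [List.flatMap_cons, List.flatMap_cons]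
        by_cases hba : b = colour a
        · subst hba
          rw [List.filter_cons, if_pos (by simp)]
          have hrest : L.flatMap (fun c => (a :: tl).filter (fun s => colour s = c))
              = L.flatMap (fun c => tl.filter (fun s => colour s = c)) := by
            simp only [List.flatMap]
            congr 1
            apply List.map_congr_left
            intro c hcL
            have hcb : colour a < c := (List.pairwise_cons.1 hLp).1 c hcL
            rw [List.filter_cons, if_neg (by simp only [decide_eq_true_eq]; exact ne_of_lt hcb)]
          rw [hrest]
          simp
        · have hmem' : colour a ∈ L := by
            rcases List.mem_cons.1 hmem with h | h
            · exact (hba h.symm).elim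
            · exact h
          have hblt : b < colour a := by
            have := (List.pairwise_cons.1 hLp).1
            exact this _ hmem'
          have hfilc : (a :: tl).filter (fun s => colour s = b) = [] := by
            apply List.filter_eq_nil_iff.2
            intro s hs
            have hbs : colour a ≤ colour s := by
              rcases List.mem_cons.1 hs with h | h
              · rw [h]
              · exact hhead _ h
            have : colour s ≠ b := fun h => absurd (h ▸ hbs) (not_le.2 hblt)
            simp [this]
          have hfilc2 : tl.filter (fun s => colour s = b) = [] := by
            apply List.filter_eq_nil_iff.2
            intro s hs
            have hbs : colour a ≤ colour s := hhead _ hs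
            have : colour s ≠ b := fun h => absurd (h ▸ hbs) (not_le.2 hblt)
            simp [this]
          rw [hfilc, hfilc2, List.nil_append, List.nil_append]
          exact ihL (List.pairwise_cons.1 hLp).2 hmem'
    rw [key (List.finRange d) (List.pairwise_lt_finRange d) (List.mem_finRange _), ih htl]



/-! ### more list lemmas -/

lemma sorted_toList (m : Fin d → List (Step d)) (hm : OKBlocks m) :
    (toList m).Pairwise ColourLE := by
  unfold toList
  rw [List.pairwise_flatMap]
  constructor
  · intro c _
    apply List.pairwise_of_forall_mem_list
    intro x hx y hy
    unfold ColourLE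
    rw [hm c x hx, hm c y hy]
  · apply List.Pairwise.imp ?_ (List.pairwise_lt_finRange d)
    intro c₁ c₂ h12 x hx y hy
    unfold ColourLE
    rw [hm _ x hx, hm _ y hy]
    exact le_of_lt h12

lemma list_sum_add {γ : Type*} (L : List γ) (f g : γ → ℕ) :
    (L.map (fun c => f c + g c)).sum = (L.map f).sum + (L.map g).sum := by
  induction L with
  | nil => simp
  | cons a L ih => simp [ih]; omega

lemma length_toList_ins (o : Fin d → Option (Step d)) (m : Fin d → List (Step d)) :
    (toList (ins o m)).length = countSomes o + (toList m).length := by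
  classical
  unfold toList ins
  rw [List.length_flatMap, List.length_flatMap]
  have h1 : (List.map (fun c => ((o c).toList ++ m c).length) (List.finRange d))
      = (List.finRange d).map (fun c => (o c).toList.length + (m c).length) := by
    apply List.map_congr_left
    intro c _
    simp [List.length_append]
  rw [h1, list_sum_add]
  congr 1
  have h2 : countSomes o = ∑ c : Fin d, ((o c).toList.length) := by
    unfold countSomes
    rw [Finset.card_filter]
    apply Finset.sum_congr rfl
    intro c _
    cases h : o c <;> simp [h]
  rw [h2, Fin.sum_univ_def]

lemma prodUpTo_mem (H : Subgroup (Perm (Fin d))) (k : ℕ) (m : Fin d → List (Step d))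
    (h : ∀ c : Fin d, ∀ s ∈ m c, stepPerm s ∈ H) : prodUpTo k m ∈ H := by
  apply Subgroup.list_prod_mem
  intro x hx
  rcases List.mem_map.1 hx with ⟨c, _, rfl⟩
  apply Subgroup.list_prod_mem
  intro y hy
  rcases List.mem_map.1 hy with ⟨s, hs, rfl⟩
  exact h c s hs

lemma monotone_of_pairwise (l : List (Step d)) (N : ℕ) (h : l.length = N)
    (hp : l.Pairwise ColourLE) :
    Monotone (fun j : Fin N => colour (l.get (Fin.cast h.symm j))) := by
  intro i j hij
  rcases eq_or_lt_of_le hij with heq | hlt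
  · cases heq; exact le_refl _
  · exact List.pairwise_iff_get.1 hp _ _ hlt

lemma ofFn_get_cast (l : List (Step d)) (N : ℕ) (h : l.length = N) :
    List.ofFn (fun j : Fin N => l.get (Fin.cast h.symm j)) = l := by
  subst h
  simp only [Fin.cast_refl, id]
  exact List.ofFn_get l

lemma unappend {x y : Option (Step d)} {a b : List (Step d)}
    (hiso : x.isSome = y.isSome) (h : x.toList ++ a = y.toList ++ b) :
    x = y ∧ a = b := by
  cases x <;> cases y <;> simp_all

/-! ### cycle type bookkeeping -/

lemma hasCycleType_card {ρ : Perm (Fin d)} {α : d.Partition}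
    (hd : 1 ≤ d) (h : HasCycleType ρ α) :
    α.parts.card + mu ρ = d ∧ 1 ≤ Multiset.card α.parts := by
  have hcard : Multiset.card α.parts
      = Multiset.card ρ.cycleType + (d - ρ.support.card) := by
    rw [h, Multiset.card_add, Multiset.card_replicate]
  have hsupp : ρ.support.card ≤ d := by
    have := Finset.card_le_univ ρ.support
    simpa using this
  have hcyc := cycleType_card_le ρ
  constructor
  · unfold mu; omega
  · by_contra hzero
    push_neg at hzero
    have h0 : Multiset.card α.parts = 0 := by omega
    have : α.parts = 0 := Multiset.card_eq_zero.1 h0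
    have hsum := α.parts_sum
    rw [this] at hsum
    simp at hsum
    omega

lemma hasCycleType_one : HasCycleType (1 : Perm (Fin d)) (onesPartition d) := by
  unfold HasCycleType onesPartition
  simp

lemma onesPartition_card : Multiset.card (onesPartition d).parts = d := by
  unfold onesPartition
  simp

lemma stepProd_eq_blockProd {r : ℕ} (W : Fin r → Step d) :
    stepProd W = blockProd (List.ofFn W) := by
  unfold stepProd blockProd
  rw [List.map_ofFn]
  rfl

/-! ### the packing construction -/

def MSub (d g : ℕ) (α β : d.Partition) :=
  {p : Equiv.Perm (Fin d) ×
      (Fin (2 * g + α.parts.card + β.parts.card - 2) → Step d) //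
    HasCycleType p.1 α ∧ HasCycleType (p.1 * stepProd p.2) β ∧
    (Monotone fun j => colour (p.2 j)) ∧
    TransitiveVia ({p.1} ∪ Set.range fun j => stepPerm (p.2 j))}

instance (d g : ℕ) (α β : d.Partition) : Finite (MSub d g α β) := by
  unfold MSub; exact Subtype.finite

def Src (d g : ℕ) := Σ α : d.Partition, Σ β : d.Partition, MSub d g α β

def TSub (d g : ℕ) := MSub d g (onesPartition d) (onesPartition d)

instance (d g : ℕ) : Finite (TSub d g) := by unfold TSub; infer_instance

def Trg (d g : ℕ) := Finset (Fin d) × Finset (Fin d) × TSub d g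

instance (d g : ℕ) : Finite (Trg d g) := by unfold Trg; infer_instance

noncomputable def somesOf (o : Fin d → Option (Step d)) : Finset (Fin d) :=
  Finset.univ.filter (fun c => (o c).isSome)

def Spec (d g : ℕ) (x : Src d g) (y : Trg d g) : Prop :=
  ∃ (o₁ o₂ : Fin d → Option (Step d)) (m : Fin d → List (Step d)),
    OKOpt o₁ ∧ OKOpt o₂ ∧ OKBlocks m ∧
    toList m = List.ofFn x.2.2.val.2 ∧
    List.ofFn y.2.2.val.2 = toList (ins o₂ (ins o₁ m)) ∧
    y.1 = somesOf o₁ ∧ y.2.1 = somesOf o₂ ∧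
    x.2.2.val.1 = prodUpTo d (ins o₁ m) * (prodUpTo d m)⁻¹

lemma uniq {d g : ℕ} (x x' : Src d g) (y : Trg d g)
    (hx : Spec d g x y) (hx' : Spec d g x' y) : x = x' := by
  obtain ⟨α, β, p⟩ := x
  obtain ⟨α', β', p'⟩ := x'
  obtain ⟨o₁, o₂, m, ho₁, ho₂, hm, hWm, hy, hC₁, hC₂, hρ⟩ := hx
  obtain ⟨o₁', o₂', m', ho₁', ho₂', hm', hWm', hy', hC₁', hC₂', hρ'⟩ := hx'
  -- the doubly-extended blocks agree
  have hins2 : OKBlocks (ins o₂ (ins o₁ m)) := okblocks_ins (okblocks_ins hm ho₁) ho₂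
  have hins2' : OKBlocks (ins o₂' (ins o₁' m')) := okblocks_ins (okblocks_ins hm' ho₁') ho₂'
  have htl2 : toList (ins o₂ (ins o₁ m)) = toList (ins o₂' (ins o₁' m')) := by
    rw [← hy, ← hy']
  have hB : ∀ c, ins o₂ (ins o₁ m) c = ins o₂' (ins o₁' m') c := by
    intro c
    rw [← recover _ hins2 c, ← recover _ hins2' c, htl2]
  -- peel off the outer insertions
  have hsome₂ : ∀ c, (o₂ c).isSome = (o₂' c).isSome := by
    intro c
    have h1 : (c ∈ somesOf o₂) = (c ∈ somesOf o₂') := by rw [← hC₂, ← hC₂']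
    simp only [somesOf, Finset.mem_filter, Finset.mem_univ, true_and] at h1
    rw [eq_iff_iff] at h1
    by_cases hh : (o₂ c).isSome <;> simp_all
  have hpeel₂ : ∀ c, o₂ c = o₂' c ∧ ins o₁ m c = ins o₁' m' c := by
    intro c
    exact unappend (hsome₂ c) (hB c)
  have hsome₁ : ∀ c, (o₁ c).isSome = (o₁' c).isSome := by
    intro c
    have h1 : (c ∈ somesOf o₁) = (c ∈ somesOf o₁') := by rw [← hC₁, ← hC₁']
    simp only [somesOf, Finset.mem_filter, Finset.mem_univ, true_and] at h1
    rw [eq_iff_iff] at h1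
    by_cases hh : (o₁ c).isSome <;> simp_all
  have hpeel₁ : ∀ c, o₁ c = o₁' c ∧ m c = m' c := by
    intro c
    exact unappend (hsome₁ c) (hpeel₂ c).2
  have hmm : m = m' := funext (fun c => (hpeel₁ c).2)
  have hoo₁ : o₁ = o₁' := funext (fun c => (hpeel₁ c).1)
  -- hence the starting permutations agree
  have hρeq : p.val.1 = p'.val.1 := by rw [hρ, hρ', hmm, hoo₁]
  -- and the walk products agree
  have hsp : stepProd p.val.2 = stepProd p'.val.2 := by
    rw [stepProd_eq_blockProd, stepProd_eq_blockProd, ← hWm, ← hWm', hmm]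
  -- partitions agree
  have hα : α = α' := by
    apply Nat.Partition.ext
    rw [p.property.1, p'.property.1, hρeq]
  subst hα
  have hβ : β = β' := by
    apply Nat.Partition.ext
    rw [p.property.2.1, p'.property.2.1, hρeq, hsp]
  subst hβ
  have hW : p.val.2 = p'.val.2 := by
    apply List.ofFn_inj.1
    rw [← hWm, ← hWm', hmm]
  have hp : p = p' := Subtype.ext (Prod.ext hρeq hW)
  rw [hp]

lemma exists_pack {d g : ℕ} (hd : 1 ≤ d) (x : Src d g) :
    ∃ y : Trg d g, Spec d g x y := by
  classical
  obtain ⟨α, β, p⟩ := x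
  obtain ⟨⟨ρ, W⟩, hα, hβ, hmono, htrans⟩ := p
  set m : Fin d → List (Step d) :=
    fun c => (List.ofFn W).filter (fun s => colour s = c) with hmdef
  have hm : OKBlocks m := okblocks_filter (List.ofFn W)
  have hlp : (List.ofFn W).Pairwise ColourLE := by
    rw [List.pairwise_iff_get]
    intro i j hij
    show colour _ ≤ colour _
    rw [List.get_ofFn, List.get_ofFn]
    exact hmono (le_of_lt hij)
  have hsplit : toList m = List.ofFn W := split_sorted (List.ofFn W) hlp
  -- first insertion: realize ρ
  obtain ⟨o₁, ho₁, -, hP₁, hc₁⟩ :=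
    ext_ins d m hm ρ (fun z hz => absurd z.isLt (by omega))
  set m₁ : Fin d → List (Step d) := ins o₁ m with hm₁def
  have hm₁ : OKBlocks m₁ := okblocks_ins hm ho₁
  set π : Perm (Fin d) := ρ * stepProd W with hπdef
  -- second insertion: realize π⁻¹
  obtain ⟨o₂, ho₂, -, hP₂, hc₂⟩ :=
    ext_ins d m₁ hm₁ π⁻¹ (fun z hz => absurd z.isLt (by omega))
  set m₂ : Fin d → List (Step d) := ins o₂ m₁ with hm₂def
  have hm₂ : OKBlocks m₂ := okblocks_ins hm₁ ho₂
  set l' : List (Step d) := toList m₂ with hl'def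
  -- the products
  have hprodm : prodUpTo d m = stepProd W := by
    rw [stepProd_eq_blockProd, ← hsplit, blockProd_toList]
  have hprodl' : blockProd l' = 1 := by
    rw [hl'def, blockProd_toList, hP₂, hP₁, hprodm, hπdef]
    group
  -- lengths
  have hμα := hasCycleType_card hd (show HasCycleType ρ α from hα)
  have hμβ := hasCycleType_card hd hβ
  have hlen : l'.length = 2 * g + (onesPartition d).parts.card
      + (onesPartition d).parts.card - 2 := by
    have e1 : l'.length = countSomes o₂ + (toList m₁).length := length_toList_ins o₂ m₁
    have e2 : (toList m₁).length = countSomes o₁ + (toList m).length := length_toList_ins o₁ m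
    have e3 : (toList m).length = 2 * g + α.parts.card + β.parts.card - 2 := by
      rw [hsplit, List.length_ofFn]
    have e4 : countSomes o₁ = mu ρ := hc₁
    have e5 : countSomes o₂ = mu π := by rw [hc₂, mu_inv]
    rw [onesPartition_card, e1, e2, e3, e4, e5]
    have h1 := hμα.1
    have h2 := hμβ.1
    have h3 := hμα.2
    have h4 := hμβ.2
    omega
  set N : ℕ := 2 * g + (onesPartition d).parts.card + (onesPartition d).parts.card - 2
    with hNdef
  set W' : Fin N → Step d := fun j => l'.get (Fin.cast hlen.symm j) with hW'def
  have hofW' : List.ofFn W' = l' := ofFn_get_cast l' N hlen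
  -- properties of the new walk
  have hstep' : stepProd W' = 1 := by
    rw [stepProd_eq_blockProd, hofW', hprodl']
  have hcyc1 : HasCycleType ((1 : Perm (Fin d)), W').1 (onesPartition d) := hasCycleType_one
  have hcyc2 : HasCycleType ((1 : Perm (Fin d)) * stepProd W') (onesPartition d) := by
    rw [hstep', mul_one]
    exact hasCycleType_one
  have hmono' : Monotone fun j => colour (W' j) := by
    rw [hW'def]
    exact monotone_of_pairwise l' N hlen (sorted_toList m₂ hm₂)
  -- transitivity
  have htrans' : TransitiveVia ({(1 : Perm (Fin d))} ∪ Set.range fun j => stepPerm (W' j)) := by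
    set H : Subgroup (Perm (Fin d)) :=
      Subgroup.closure ({(1 : Perm (Fin d))} ∪ Set.range fun j => stepPerm (W' j)) with hHdef
    have hmem_l' : ∀ s ∈ l', stepPerm s ∈ H := by
      intro s hs
      rcases List.mem_iff_get.1 hs with ⟨n, hn⟩
      have hible : W' (Fin.cast hlen n) = s := by
        have hcc : Fin.cast hlen.symm (Fin.cast hlen n) = n := by apply Fin.ext; rfl
        calc W' (Fin.cast hlen n)
            = l'.get (Fin.cast hlen.symm (Fin.cast hlen n)) := rfl
          _ = l'.get n := by rw [hcc]
          _ = s := hn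
      rw [← hible]
      apply Subgroup.subset_closure
      exact Set.mem_union_right _ ⟨Fin.cast hlen n, rfl⟩
    have hsub_m : ∀ c : Fin d, ∀ s ∈ m c, s ∈ l' := by
      intro c s hs
      apply mem_toList.2
      exact ⟨c, by
        rw [hm₂def, hm₁def]
        exact List.mem_append_right _ (List.mem_append_right _ hs)⟩
    have hsub_m₁ : ∀ c : Fin d, ∀ s ∈ m₁ c, s ∈ l' := by
      intro c s hs
      apply mem_toList.2
      exact ⟨c, by
        rw [hm₂def]
        exact List.mem_append_right _ hs⟩
    have hPm : prodUpTo d m ∈ H :=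
      prodUpTo_mem H d m (fun c s hs => hmem_l' s (hsub_m c s hs))
    have hPm₁ : prodUpTo d m₁ ∈ H :=
      prodUpTo_mem H d m₁ (fun c s hs => hmem_l' s (hsub_m₁ c s hs))
    have hρH : ρ ∈ H := by
      have : ρ = prodUpTo d m₁ * (prodUpTo d m)⁻¹ := by
        rw [hP₁]; group
      rw [this]
      exact H.mul_mem hPm₁ (H.inv_mem hPm)
    have hold : ({ρ} ∪ Set.range fun j => stepPerm (W j) : Set (Perm (Fin d))) ⊆ ↑H := by
      apply Set.union_subset
      · intro z hz
        rw [Set.mem_singleton_iff.1 hz]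
        exact hρH
      · rintro z ⟨j, rfl⟩
        apply hmem_l'
        have h1 : W j ∈ List.ofFn W := List.mem_ofFn.2 ⟨j, rfl⟩
        have h2 : W j ∈ m (colour (W j)) := by
          rw [hmdef]
          exact List.mem_filter.2 ⟨h1, decide_eq_true rfl⟩
        exact hsub_m _ _ h2
    have hle : Subgroup.closure ({ρ} ∪ Set.range fun j => stepPerm (W j)) ≤ H :=
      (Subgroup.closure_le H).2 hold
    intro z w
    obtain ⟨gg, hgg, hgzw⟩ := htrans z w
    exact ⟨gg, hle hgg, hgzw⟩
  refine ⟨⟨somesOf o₁, somesOf o₂, ⟨((1 : Perm (Fin d)), W'),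
    hcyc1, hcyc2, hmono', htrans'⟩⟩, ?_⟩
  refine ⟨o₁, o₂, m, ho₁, ho₂, hm, ?_, ?_, rfl, rfl, ?_⟩
  · exact hsplit
  · exact hofW'
  · rw [hP₁, hprodm]
    show ρ = ρ * stepProd W * (stepProd W)⁻¹
    group

end HurwitzAux

open HurwitzAux in
/-- The sum over all pairs of partitions of `d` of the monotone double Hurwitz
numbers is at most `4^d` times the monotone simple Hurwitz number
`H⃗_g(1^d, 1^d)`. -/
theorem stmt12 (d g : ℕ) (hd : 1 ≤ d) :
    ∑ α : d.Partition, ∑ β : d.Partition, monotoneHurwitz d g α β ≤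
      4 ^ d * monotoneHurwitz d g (onesPartition d) (onesPartition d) := by
  classical
  letI : ∀ α β : d.Partition, Fintype (MSub d g α β) := fun α β => Fintype.ofFinite _
  letI : Fintype (Src d g) := by unfold Src; infer_instance
  have hsrc : Nat.card (Src d g) = ∑ α : d.Partition, ∑ β : d.Partition,
      monotoneHurwitz d g α β := by
    rw [Nat.card_eq_fintype_card]
    show Fintype.card (Σ α : d.Partition, Σ β : d.Partition, MSub d g α β) = _
    rw [Fintype.card_sigma]
    apply Finset.sum_congr rfl
    intro α _
    rw [Fintype.card_sigma]
    apply Finset.sum_congr rfl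
    intro β _
    show Fintype.card (MSub d g α β) = Nat.card (MSub d g α β)
    rw [Nat.card_eq_fintype_card]
  have hpack : ∃ f : Src d g → Trg d g, Function.Injective f := by
    refine ⟨fun x => (exists_pack hd x).choose, ?_⟩
    intro x x' h
    have h1 := (exists_pack hd x).choose_spec
    have h2 := (exists_pack hd x').choose_spec
    simp only at h
    rw [← h] at h2
    exact uniq x x' _ h1 h2
  obtain ⟨f, hf⟩ := hpack
  have hle : Nat.card (Src d g) ≤ Nat.card (Trg d g) :=
    Nat.card_le_card_of_injective f hf
  have htrg : Nat.card (Trg d g)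
      = 2 ^ d * (2 ^ d * monotoneHurwitz d g (onesPartition d) (onesPartition d)) := by
    show Nat.card (Finset (Fin d) × Finset (Fin d) × TSub d g) = _
    rw [Nat.card_prod, Nat.card_prod]
    have hfin : Nat.card (Finset (Fin d)) = 2 ^ d := by
      rw [Nat.card_eq_fintype_card, Fintype.card_finset, Fintype.card_fin]
    rw [hfin]
    rfl
  rw [← hsrc]
  calc Nat.card (Src d g) ≤ Nat.card (Trg d g) := hle
    _ = 2 ^ d * (2 ^ d * monotoneHurwitz d g (onesPartition d) (onesPartition d)) := htrg
    _ = 4 ^ d * monotoneHurwitz d g (onesPartition d) (onesPartition d) := by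
        rw [← mul_assoc, ← mul_pow]
        norm_num
end
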